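/- arXiv:1512.04485 — 3 statements merged into one kernel-verified Lean document; each statement's English description precedes it below -/
import Mathlib

section
/- Let λ, ν ∈ Λ with λ, ν, λ+ν all nonzero. For a nonzero μ ∈ Λ set h_i(μ) := h_i + (t1+t2)/E(μ) in H. If m_{i,j} = 3, then h_i(λ) h_j(λ+ν) h_i(ν) = h_j(ν) h_i(λ+ν) h_j(λ). -/
open CoxeterSystem

/-- `E(λ) = e^{-λ} - 1`. -/
noncomputable def Eelt {Λ : Type*} [AddCommGroup Λ] {K : Type*} [Field K]
    (exp : Multiplicative Λ →* Kˣ) (lam : Λ) : K :=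
  ((exp (Multiplicative.ofAdd (-lam)) : Kˣ) : K) - 1

/-- `h_i(μ) := h_i + (t1+t2)/E(μ)`. -/
noncomputable def YBfactor {r : ℕ} {W : Type*} [Group W] {M : CoxeterMatrix (Fin r)}
    (cs : CoxeterSystem M W) {Λ : Type*} [AddCommGroup Λ] {K : Type*} [Field K]
    (exp : Multiplicative Λ →* Kˣ) (t1 t2 : K) {H : Type*} [Ring H] [Algebra K H]
    (h : W → H) (i : Fin r) (mu : Λ) : H :=
  h (cs.simple i) + algebraMap K H ((t1 + t2) / Eelt exp mu)

/-- If `μ ≠ 0` then `E(μ) ≠ 0`. -/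
lemma Eelt_ne_zero {Λ : Type*} [AddCommGroup Λ] {K : Type*} [Field K]
    {exp : Multiplicative Λ →* Kˣ} (hinj : Function.Injective exp)
    {mu : Λ} (hmu : mu ≠ 0) : Eelt exp mu ≠ 0 := by
  intro h0
  apply hmu
  have h1 : ((exp (Multiplicative.ofAdd (-mu)) : Kˣ) : K) = 1 := by
    have := sub_eq_zero.mp h0
    simpa [Eelt, sub_eq_zero] using h0
  have h2 : exp (Multiplicative.ofAdd (-mu)) = 1 := Units.ext (by simpa using h1)
  have h3 : Multiplicative.ofAdd (-mu) = (1 : Multiplicative Λ) := hinj (by rw [h2, map_one])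
  have h4 : -mu = 0 := by simpa using congrArg Multiplicative.toAdd h3
  exact neg_eq_zero.mp h4

/-- Multiplicativity relation for `E`. -/
lemma Eelt_add_eq {Λ : Type*} [AddCommGroup Λ] {K : Type*} [Field K]
    (exp : Multiplicative Λ →* Kˣ) (a b : Λ) :
    Eelt exp (a + b) = Eelt exp a * Eelt exp b + Eelt exp a + Eelt exp b := by
  unfold Eelt
  have h : Multiplicative.ofAdd (-(a + b)) =
      Multiplicative.ofAdd (-a) * Multiplicative.ofAdd (-b) := by
    rw [← ofAdd_add]
    congr 1
    abel
  rw [h, map_mul, Units.val_mul]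
  ring

/-- Expansion identity: the Yang-Baxter relation follows formally from the
quadratic relations, the braid relation and a scalar identity. -/
lemma yb_helper {K H : Type*} [Field K] [Ring H] [Algebra K H]
    (X Y : H) (a b c T u : K)
    (hX : X * X = T • X - u • (1:H)) (hY : Y * Y = T • Y - u • (1:H))
    (hbr : X * (Y * X) = Y * (X * Y))
    (hs : a*b + b*c - a*c + b*T = 0) :
    (X + a • 1) * (Y + b • 1) * (X + c • 1) = (Y + c • 1) * (X + b • 1) * (Y + a • 1) := by
  simp only [add_mul, mul_add, smul_mul_assoc, mul_smul_comm, one_mul, mul_one, smul_smul,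
    mul_assoc]
  rw [hX, hY, hbr]
  match_scalars
  all_goals first
    | ring1
    | linear_combination hs
    | linear_combination -hs

/-- The quadratic relation, rewritten. -/
lemma quad_smul {K H : Type*} [Field K] [Ring H] [Algebra K H] (A : H) (t1 t2 : K)
    (hq : (A - algebraMap K H t1) * (A - algebraMap K H t2) = 0) :
    A * A = (t1 + t2) • A - (t1 * t2) • (1:H) := by
  rw [Algebra.algebraMap_eq_smul_one, Algebra.algebraMap_eq_smul_one] at hq
  have h1 : A * A - (t1 + t2) • A + (t1 * t2) • (1:H) = 0 := by
    rw [← hq]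
    simp only [sub_mul, mul_sub, smul_mul_assoc, mul_smul_comm, one_mul, mul_one, smul_smul]
    module
  have h2 : A * A - ((t1 + t2) • A - (t1 * t2) • (1:H)) = 0 := by
    rw [← h1]; abel
  exact sub_eq_zero.mp h2

/-- The braid relation in the Hecke algebra, for `m i j = 3`. -/
lemma hecke_braid {r : ℕ} {W : Type*} [Group W] {M : CoxeterMatrix (Fin r)}
    (cs : CoxeterSystem M W) {K : Type*} [Field K] (t1 t2 : K)
    {H : Type*} [Ring H] [Algebra K H]
    (h : W → H)
    (hmul : ∀ u v : W, cs.length (u * v) = cs.length u + cs.length v →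
      h (u * v) = h u * h v)
    (hquad : ∀ i : Fin r,
      (h (cs.simple i) - algebraMap K H t1) * (h (cs.simple i) - algebraMap K H t2) = 0)
    (i j : Fin r) (hm : orderOf (cs.simple i * cs.simple j) = 3) :
    h (cs.simple i) * (h (cs.simple j) * h (cs.simple i)) =
      h (cs.simple j) * (h (cs.simple i) * h (cs.simple j)) := by
  set si := cs.simple i with hsi
  set sj := cs.simple j with hsj
  have hsii : si * si = 1 := cs.simple_mul_simple_self i
  have hsjj : sj * sj = 1 := cs.simple_mul_simple_self j
  have h3 : (si * sj) ^ 3 = 1 := hm ▸ pow_orderOf_eq_one (si * sj)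
  have hne1 : si * sj ≠ 1 := by
    intro hone1
    rw [orderOf_eq_one_iff.mpr hone1] at hm
    omega
  have hne1' : sj * si ≠ 1 := by
    intro hone1
    apply hne1
    rw [eq_inv_of_mul_eq_one_left hone1]
    simp
  have hbraidW : si * sj * si = sj * si * sj := by
    have e : si * sj * si * (sj * si * sj) = 1 := by
      calc si * sj * si * (sj * si * sj) = (si * sj) ^ 3 := by
            simp only [pow_succ, pow_zero, one_mul, mul_assoc]
        _ = 1 := h3
    rw [eq_inv_of_mul_eq_one_left e, mul_inv_rev, mul_inv_rev, hsi, hsj, cs.inv_simple,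
      cs.inv_simple, ← hsi, ← hsj, mul_assoc]
  have lsi : cs.length si = 1 := cs.length_simple i
  have lsj : cs.length sj = 1 := cs.length_simple j
  have lij : cs.length (si * sj) = 2 := by
    have hle := cs.length_mul_le si sj
    have hmod := cs.length_mul_mod_two si sj
    rw [lsi, lsj] at hle hmod
    have hne0 : cs.length (si * sj) ≠ 0 := fun h0 => hne1 (cs.length_eq_zero_iff.mp h0)
    omega
  have lji : cs.length (sj * si) = 2 := by
    have hle := cs.length_mul_le sj si
    have hmod := cs.length_mul_mod_two sj si
    rw [lsi, lsj] at hle hmod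
    have hne0 : cs.length (sj * si) ≠ 0 := fun h0 => hne1' (cs.length_eq_zero_iff.mp h0)
    omega
  have hij : h (si * sj) = h si * h sj := hmul si sj (by rw [lij, lsi, lsj])
  have hji : h (sj * si) = h sj * h si := hmul sj si (by rw [lji, lsi, lsj])
  rcases cs.length_mul_simple (si * sj) i with l3 | l1
  · -- generic case : length (si*sj*si) = 3
    rw [← hsi, lij] at l3
    have e1 : h (si * sj * si) = h (si * sj) * h si :=
      hmul (si * sj) si (by rw [l3, lij, lsi])
    have e2 : h (sj * si * sj) = h (sj * si) * h sj :=
      hmul (sj * si) sj (by rw [← hbraidW, l3, lji, lsj])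
    calc h si * (h sj * h si) = h (si * sj * si) := by rw [e1, hij, mul_assoc]
      _ = h (sj * si * sj) := by rw [hbraidW]
      _ = h sj * (h si * h sj) := by rw [e2, hji, mul_assoc]
  · -- degenerate case : length (si*sj*si) = 1
    rw [← hsi, lij] at l1
    replace l1 : cs.length (si * sj * si) = 1 := by omega
    have hq : ∀ k : Fin r, h (cs.simple k) * h (cs.simple k) =
        (t1 + t2) • h (cs.simple k) - (t1 * t2) • (1:H) :=
      fun k => quad_smul (h (cs.simple k)) t1 t2 (hquad k)
    have hcan1 : (si * sj * si) * si = si * sj := by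
      rw [mul_assoc (si * sj) si si, hsii, mul_one]
    have hcan3 : sj * (si * sj * si) = si * sj := by
      rw [hbraidW, ← mul_assoc, ← mul_assoc, hsjj, one_mul]
    have ew1 : h (si * sj) = h (si * sj * si) * h si := by
      have e := hmul (si * sj * si) si (by rw [hcan1, lij, l1, lsi])
      rwa [hcan1] at e
    have ew3 : h (si * sj) = h sj * h (si * sj * si) := by
      have e := hmul sj (si * sj * si) (by rw [hcan3, lij, l1, lsj])
      rwa [hcan3] at e
    have c1 : h si * (h sj * h si) =
        (t1 + t2) • h (si * sj) - (t1 * t2) • h (si * sj * si) := by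
      calc h si * (h sj * h si) = (h si * h sj) * h si := by rw [mul_assoc]
        _ = (h (si * sj * si) * h si) * h si := by rw [← hij, ew1]
        _ = h (si * sj * si) * (h si * h si) := mul_assoc _ _ _
        _ = h (si * sj * si) * ((t1 + t2) • h si - (t1 * t2) • (1:H)) := by rw [hq i]
        _ = (t1 + t2) • (h (si * sj * si) * h si) - (t1 * t2) • h (si * sj * si) := by
            rw [mul_sub, mul_smul_comm, mul_smul_comm, mul_one]
        _ = (t1 + t2) • h (si * sj) - (t1 * t2) • h (si * sj * si) := by rw [← ew1]
    have c3 : h sj * (h si * h sj) =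
        (t1 + t2) • h (si * sj) - (t1 * t2) • h (si * sj * si) := by
      calc h sj * (h si * h sj) = h sj * h (si * sj) := by rw [hij]
        _ = h sj * (h sj * h (si * sj * si)) := by rw [ew3]
        _ = (h sj * h sj) * h (si * sj * si) := (mul_assoc _ _ _).symm
        _ = ((t1 + t2) • h sj - (t1 * t2) • (1:H)) * h (si * sj * si) := by rw [hq j]
        _ = (t1 + t2) • (h sj * h (si * sj * si)) - (t1 * t2) • h (si * sj * si) := by
            rw [sub_mul, smul_mul_assoc, smul_mul_assoc, one_mul]
        _ = (t1 + t2) • h (si * sj) - (t1 * t2) • h (si * sj * si) := by rw [← ew3]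
    rw [c1, c3]

/-- the Yang–Baxter relation for `m_{i,j} = 3`:
`h_i(λ) h_j(λ+ν) h_i(ν) = h_j(ν) h_i(λ+ν) h_j(λ)`. -/
theorem yang_baxter_relation_m_eq_three
    {r : ℕ} {W : Type*} [Group W] {M : CoxeterMatrix (Fin r)} (cs : CoxeterSystem M W)
    {Λ : Type*} [AddCommGroup Λ] (α : Fin r → Λ)
    {K : Type*} [Field K] (exp : Multiplicative Λ →* Kˣ)
    (hexp_inj : Function.Injective exp) (t1 t2 : K)
    {H : Type*} [Ring H] [Algebra K H]
    (h : W → H) (hb : Module.Basis W K H)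
    (hbasis : ∀ w : W, hb w = h w)
    (hone : h 1 = 1)
    (hmul : ∀ u v : W, cs.length (u * v) = cs.length u + cs.length v →
      h (u * v) = h u * h v)
    (hquad : ∀ i : Fin r,
      (h (cs.simple i) - algebraMap K H t1) * (h (cs.simple i) - algebraMap K H t2) = 0)
    (i j : Fin r) (hm : orderOf (cs.simple i * cs.simple j) = 3)
    (lam nu : Λ) (hlam : lam ≠ 0) (hnu : nu ≠ 0) (hln : lam + nu ≠ 0) :
    YBfactor cs exp t1 t2 h i lam * YBfactor cs exp t1 t2 h j (lam + nu) *
        YBfactor cs exp t1 t2 h i nu =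
      YBfactor cs exp t1 t2 h j nu * YBfactor cs exp t1 t2 h i (lam + nu) *
        YBfactor cs exp t1 t2 h j lam := by
  have hEx : Eelt exp lam ≠ 0 := Eelt_ne_zero hexp_inj hlam
  have hEy : Eelt exp nu ≠ 0 := Eelt_ne_zero hexp_inj hnu
  have hEz : Eelt exp (lam + nu) ≠ 0 := Eelt_ne_zero hexp_inj hln
  have hEadd := Eelt_add_eq exp lam nu
  set T := t1 + t2 with hT
  have hs : (T / Eelt exp lam) * (T / Eelt exp (lam + nu)) +
      (T / Eelt exp (lam + nu)) * (T / Eelt exp nu) -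
      (T / Eelt exp lam) * (T / Eelt exp nu) + (T / Eelt exp (lam + nu)) * T = 0 := by
    rw [hEadd] at hEz ⊢
    have key : ∀ D : K, D = Eelt exp lam * Eelt exp nu + Eelt exp lam + Eelt exp nu → D ≠ 0 →
        (T / Eelt exp lam) * (T / D) + (T / D) * (T / Eelt exp nu) -
        (T / Eelt exp lam) * (T / Eelt exp nu) + (T / D) * T = 0 := by
      intro D hD hD0
      field_simp
      subst hD
      ring
    exact key _ rfl hEz
  have hX := quad_smul (h (cs.simple i)) t1 t2 (hquad i)
  have hY := quad_smul (h (cs.simple j)) t1 t2 (hquad j)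
  have hbr := hecke_braid cs t1 t2 h hmul hquad i j hm
  have := yb_helper (h (cs.simple i)) (h (cs.simple j))
    (T / Eelt exp lam) (T / Eelt exp (lam + nu)) (T / Eelt exp nu) T (t1 * t2)
    hX hY (by rw [hbr]) hs
  simpa only [YBfactor, Algebra.algebraMap_eq_smul_one, hT] using this
end

section
/- Let λ, ν ∈ Λ with λ, ν, λ+ν, λ+2ν all nonzero. For a nonzero μ ∈ Λ set h_i(μ) := h_i + (t1+t2)/E(μ) in H. If m_{i,j} = 4, then h_i(λ) h_j(λ+ν) h_i(λ+2ν) h_j(ν) = h_j(ν) h_i(λ+2ν) h_j(λ+ν) h_i(λ). -/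
open CoxeterSystem

open CoxeterSystem List

/-- `-1` if the two elements are equal, `1` otherwise. -/
noncomputable def flipSign {W : Type*} (u v : W) : ℤˣ := by
  classical exact if u = v then -1 else 1

@[simp] lemma flipSign_self {W : Type*} (u : W) : flipSign u u = -1 := by
  simp [flipSign]

lemma flipSign_ne {W : Type*} {u v : W} (h : u ≠ v) : flipSign u v = 1 := by
  simp [flipSign, h]

lemma flipSign_congr {W : Type*} {u v u' v' : W} (h : (u = v) ↔ (u' = v')) :
    flipSign u v = flipSign u' v' := by
  classical
  by_cases hc : u = v
  · rw [hc, flipSign_self, h.mp hc, flipSign_self]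
  · rw [flipSign_ne hc, flipSign_ne (fun hc' => hc (h.mpr hc'))]

section SgnPerm

variable {G : Type*} [Group G]

/-- The sign permutation attached to an involution `s` of a group `G`. -/
noncomputable def sgnPerm (s : G) (hs : s * s = 1) : Equiv.Perm (G × ℤˣ) :=
  Function.Involutive.toPerm (fun p => (s * p.1 * s, flipSign p.1 s * p.2)) (by
    have hfst : ∀ x : G, s * (s * x * s) * s = x := fun x => by
      calc s * (s * x * s) * s = (s * s) * x * (s * s) := by group
      _ = x := by rw [hs, one_mul, mul_one]
    have hcond : ∀ x : G, (s * x * s = s) ↔ x = s := fun x => by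
      constructor
      · intro h
        have h2 := congrArg (fun w => s * w * s) h
        simp only [hfst] at h2
        rw [h2]
        show s * s * s = s
        rw [hs, one_mul]
      · rintro rfl; rw [mul_assoc, hs, mul_one]
    rintro ⟨x, ε⟩
    simp only [Prod.mk.injEq]
    refine ⟨hfst x, ?_⟩
    by_cases hx : x = s
    · subst hx
      rw [mul_assoc, hs, mul_one]
      simp
    · rw [flipSign_ne hx, one_mul, flipSign_ne (fun h => hx ((hcond x).mp h)), one_mul])

lemma sgnPerm_apply (s : G) (hs : s * s = 1) (x : G) (ε : ℤˣ) :
    sgnPerm s hs (x, ε) = (s * x * s, flipSign x s * ε) := rfl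

lemma sgnPerm_mul_apply {a b : G} (ha : a * a = 1) (hb : b * b = 1)
    (z : G) (hz : z = a * b) (x : G) (ε : ℤˣ) :
    (sgnPerm a ha * sgnPerm b hb) (x, ε)
      = (z * x * z⁻¹, (flipSign (b*x*b) a * flipSign x b) * ε) := by
  have hainv : a⁻¹ = a := inv_eq_of_mul_eq_one_right ha
  have hbinv : b⁻¹ = b := inv_eq_of_mul_eq_one_right hb
  rw [Equiv.Perm.mul_apply, sgnPerm_apply, sgnPerm_apply]
  refine Prod.ext ?_ ?_
  · simp only
    rw [hz, mul_inv_rev, hainv, hbinv]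
    group
  · simp [mul_assoc]

lemma sgnPerm_pow_apply {a b : G} (ha : a * a = 1) (hb : b * b = 1)
    (z : G) (hz : z = a * b) (n : ℕ) (x : G) (ε : ℤˣ) :
    ((sgnPerm a ha * sgnPerm b hb) ^ n) (x, ε)
      = (z^n * x * (z^n)⁻¹,
          (∏ t ∈ Finset.range n,
            (flipSign (b*(z^t * x * (z^t)⁻¹)*b) a
              * flipSign (z^t * x * (z^t)⁻¹) b)) * ε) := by
  induction n generalizing x ε with
  | zero => simp
  | succ n ih =>
    rw [pow_succ, Equiv.Perm.mul_apply, sgnPerm_mul_apply ha hb z hz, ih]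
    have hre : ∀ t : ℕ, z^t * (z * x * z⁻¹) * (z^t)⁻¹
        = z^(t+1) * x * (z^(t+1))⁻¹ := fun t => by group
    refine Prod.ext ?_ ?_
    · simp only
      group
    · simp only [hre]
      rw [Finset.prod_range_succ']
      simp only [pow_zero, one_mul, inv_one, mul_one]
      simp [mul_assoc]

lemma sgnPerm_pow_eq_one {a b : G} (ha : a * a = 1) (hb : b * b = 1) {m : ℕ}
    (hm : (a * b) ^ m = 1) : (sgnPerm a ha * sgnPerm b hb) ^ m = 1 := by
  have hainv : a⁻¹ = a := inv_eq_of_mul_eq_one_right ha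
  have hbinv : b⁻¹ = b := inv_eq_of_mul_eq_one_right hb
  obtain ⟨z, hz⟩ : ∃ z', z' = a * b := ⟨_, rfl⟩
  rw [← hz] at hm
  have hz1 : b * z = z⁻¹ * b := by
    rw [hz, mul_inv_rev, hainv, hbinv]; group
  have hbz : ∀ t : ℕ, b * z^t = (z^t)⁻¹ * b := by
    intro t
    induction t with
    | zero => simp
    | succ n ihn =>
      rw [pow_succ, ← mul_assoc, ihn, mul_assoc, hz1]
      group
  have hbz' : ∀ t : ℕ, b * (z^t)⁻¹ = z^t * b := by
    intro t
    have h2 : z^t * (b * z^t) * (z^t)⁻¹ = z^t * ((z^t)⁻¹ * b) * (z^t)⁻¹ := by rw [hbz]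
    calc b * (z^t)⁻¹ = z^t * ((z^t)⁻¹ * b) * (z^t)⁻¹ := by group
    _ = z^t * (b * z^t) * (z^t)⁻¹ := h2.symm
    _ = z^t * b := by group
  have hconj : ∀ t : ℕ, (z^t)⁻¹ * b * z^t = (z^(t+t))⁻¹ * b := by
    intro t
    calc (z^t)⁻¹ * b * z^t = (z^t)⁻¹ * (b * z^t) := by group
    _ = (z^t)⁻¹ * ((z^t)⁻¹ * b) := by rw [hbz]
    _ = (z^(t+t))⁻¹ * b := by rw [pow_add, mul_inv_rev]; group
  apply Equiv.ext
  rintro ⟨x, ε⟩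
  rw [Equiv.Perm.one_apply, sgnPerm_pow_apply ha hb z hz, hm]
  refine Prod.ext ?_ ?_
  · simp
  · simp only
    have cond1 : ∀ t : ℕ, (z^t * x * (z^t)⁻¹ = b) ↔ (z^(t+t) = b * x⁻¹) := by
      intro t
      constructor
      · intro h
        have h2 := congrArg (fun w => (z^t)⁻¹ * w * z^t) h
        have hx0 : x = (z^t)⁻¹ * b * z^t := by rw [← h2]; group
        have hx : x = (z^(t+t))⁻¹ * b := by rw [hx0, hconj]
        rw [hx]; group
      · intro h
        have hx : x = (z^(t+t))⁻¹ * b := by rw [h]; group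
        rw [hx, ← hconj]; group
    have cond2 : ∀ t : ℕ, (b * (z^t * x * (z^t)⁻¹) * b = a)
        ↔ (z^(t+t+1) = b * x⁻¹) := by
      intro t
      have hbab : b * a * b = z⁻¹ * b := by
        rw [hz, mul_inv_rev, hainv, hbinv]
      constructor
      · intro h
        have h2 := congrArg (fun w => b⁻¹ * w * b⁻¹) h
        have hy : z^t * x * (z^t)⁻¹ = b⁻¹ * a * b⁻¹ := by rw [← h2]; group
        rw [hbinv, hbab] at hy
        have h3 := congrArg (fun w => (z^t)⁻¹ * w * z^t) hy
        have hx0 : x = (z^t)⁻¹ * (z⁻¹ * b) * z^t := by rw [← h3]; group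
        have hx1 : x = z⁻¹ * ((z^t)⁻¹ * b * z^t) := by rw [hx0]; group
        rw [hconj] at hx1
        rw [hx1]; group
      · intro h
        have hx : x = (z^(t+t+1))⁻¹ * b := by rw [h]; group
        rw [hx]
        have hlast : b * (z⁻¹ * b) * b = a := by
          rw [hz, mul_inv_rev, hainv, hbinv]
          calc b * (b * a * b) * b = (b*b) * a * (b*b) := by group
          _ = a := by rw [hb, one_mul, mul_one]
        calc b * (z^t * ((z^(t+t+1))⁻¹ * b) * (z^t)⁻¹) * b
            = b * ((z^t * (z^(t+t+1))⁻¹) * (b * (z^t)⁻¹)) * b := by group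
          _ = b * ((z^t * (z^(t+t+1))⁻¹) * (z^t * b)) * b := by rw [hbz']
          _ = b * (z⁻¹ * b) * b := by group
          _ = a := hlast
    have hterm : ∀ t : ℕ,
        flipSign (b*(z^t * x * (z^t)⁻¹)*b) a * flipSign (z^t * x * (z^t)⁻¹) b
          = flipSign (z^(t+t+1)) (b*x⁻¹) * flipSign (z^(t+t)) (b*x⁻¹) := fun t => by
      rw [flipSign_congr (cond2 t), flipSign_congr (cond1 t)]
    rw [Finset.prod_congr rfl (fun t _ => hterm t)]
    have doubling : ∀ n : ℕ,
        (∏ t ∈ Finset.range n,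
          (flipSign (z^(t+t+1)) (b*x⁻¹) * flipSign (z^(t+t)) (b*x⁻¹)))
        = ∏ u ∈ Finset.range (n+n), flipSign (z^u) (b*x⁻¹) := by
      intro n
      induction n with
      | zero => simp
      | succ p ih =>
        rw [Finset.prod_range_succ, ih, show p+1+(p+1) = (p+p)+1+1 by omega,
          Finset.prod_range_succ, Finset.prod_range_succ]
        rw [mul_assoc]
        congr 1
        rw [mul_comm]
    rw [doubling, Finset.prod_range_add]
    have hper : ∀ u, flipSign (z^(m+u)) (b*x⁻¹) = flipSign (z^u) (b*x⁻¹) := fun u => by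
      rw [pow_add, hm, one_mul]
    rw [Finset.prod_congr rfl (fun u _ => hper u), Int.units_mul_self, one_mul]

end SgnPerm

section CoxeterRep

variable {B : Type*} {W : Type*} [Group W] {M : CoxeterMatrix B} (cs : CoxeterSystem M W)
variable [DecidableEq W]

/-- The sign permutation attached to a simple reflection. -/
noncomputable def refPerm (c : B) : Equiv.Perm (W × ℤˣ) :=
  sgnPerm (cs.simple c) (cs.simple_mul_simple_self c)

lemma refPerm_liftable : M.IsLiftable (refPerm cs) := fun k l =>
  sgnPerm_pow_eq_one _ _ (cs.simple_mul_simple_pow k l)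

/-- The sign representation of the Coxeter group. -/
noncomputable def sgnRep : W →* Equiv.Perm (W × ℤˣ) :=
  cs.lift ⟨refPerm cs, refPerm_liftable cs⟩

lemma sgnRep_simple (c : B) : sgnRep cs (cs.simple c) = refPerm cs c :=
  cs.lift_apply_simple (refPerm_liftable cs) c

lemma ris_cons (c : B) (ω : List B) :
    cs.rightInvSeq (c :: ω)
      = ((cs.wordProd ω)⁻¹ * cs.simple c * cs.wordProd ω) :: cs.rightInvSeq ω := rfl

lemma sgnRep_wordProd (ω : List B) (x : W) (ε : ℤˣ) :
    (sgnRep cs (cs.wordProd ω)) (x, ε)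
      = (cs.wordProd ω * x * (cs.wordProd ω)⁻¹,
          ((-1:ℤˣ) ^ (List.count x (cs.rightInvSeq ω))) * ε) := by
  induction ω with
  | nil => simp
  | cons c ω ih =>
    rw [cs.wordProd_cons, map_mul, Equiv.Perm.mul_apply, ih, sgnRep_simple]
    rw [show refPerm cs c = sgnPerm (cs.simple c) (cs.simple_mul_simple_self c) from rfl,
      sgnPerm_apply]
    rw [ris_cons, List.count_cons]
    refine Prod.ext ?_ ?_
    · simp only
      rw [mul_inv_rev, cs.inv_simple]
      group
    · simp only
      by_cases hx : x = (cs.wordProd ω)⁻¹ * cs.simple c * cs.wordProd ω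
      · have h1 : cs.wordProd ω * x * (cs.wordProd ω)⁻¹ = cs.simple c := by
          rw [hx]; group
        rw [h1, flipSign_self]
        simp only [beq_iff_eq, if_pos hx.symm, pow_succ]
        simp [mul_assoc, mul_comm, mul_left_comm]
      · have h1 : cs.wordProd ω * x * (cs.wordProd ω)⁻¹ ≠ cs.simple c := by
          intro hcon
          apply hx
          have h2 := congrArg (fun w => (cs.wordProd ω)⁻¹ * w * cs.wordProd ω) hcon
          rw [← h2]; group
        rw [flipSign_ne h1]
        have hne : ¬ ((cs.wordProd ω)⁻¹ * cs.simple c * cs.wordProd ω = x) :=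
          fun hcon => hx hcon.symm
        simp only [beq_iff_eq, if_neg hne, add_zero, one_mul]

lemma count_ris_parity {ω ω' : List B} (hw : cs.wordProd ω = cs.wordProd ω') (x : W) :
    ((-1:ℤˣ)) ^ (List.count x (cs.rightInvSeq ω))
      = (-1) ^ (List.count x (cs.rightInvSeq ω')) := by
  have h1 := sgnRep_wordProd cs ω x 1
  have h2 := sgnRep_wordProd cs ω' x 1
  rw [← hw] at h2
  have h3 := (Prod.ext_iff.mp (h1.symm.trans h2)).2
  simpa using h3

lemma length_ge_of_nodup_odd (ω : List B) (xs : List W) (hnd : xs.Nodup)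
    (hodd : ∀ x ∈ xs, ¬ Even (List.count x (cs.rightInvSeq ω))) :
    xs.length ≤ cs.length (cs.wordProd ω) := by
  obtain ⟨ω', hlen, hpi⟩ := cs.exists_reduced_word (cs.wordProd ω)
  have hsub : ∀ x ∈ xs, x ∈ cs.rightInvSeq ω' := by
    intro x hx
    have hpar := count_ris_parity cs (hpi.symm) x
    by_contra hmem
    have h0 : List.count x (cs.rightInvSeq ω') = 0 := List.count_eq_zero_of_not_mem hmem
    rw [h0, pow_zero] at hpar
    rcases Nat.even_or_odd (List.count x (cs.rightInvSeq ω)) with he | ho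
    · exact hodd x hx he
    · rw [Odd.neg_one_pow ho] at hpar
      exact absurd hpar (by decide)
  calc xs.length = xs.toFinset.card := (List.toFinset_card_of_nodup hnd).symm
    _ ≤ (cs.rightInvSeq ω').toFinset.card := by
        apply Finset.card_le_card
        intro y hy
        rw [List.mem_toFinset] at hy ⊢
        exact hsub y hy
    _ ≤ (cs.rightInvSeq ω').length := List.toFinset_card_le _
    _ = ω'.length := cs.length_rightInvSeq ω'
    _ = cs.length (cs.wordProd ω) := by rw [hpi]; exact hlen.symm

end CoxeterRep

section Lengths

variable {B : Type*} {W : Type*} [Group W] {M : CoxeterMatrix B} (cs : CoxeterSystem M W)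
variable [DecidableEq W]

/-- A word whose right inversion sequence has no duplicates is reduced. -/
lemma isReduced_of_nodup_ris (ω : List B) (h : (cs.rightInvSeq ω).Nodup) :
    cs.length (cs.wordProd ω) = ω.length := by
  refine le_antisymm (cs.length_wordProd_le ω) ?_
  have h2 := length_ge_of_nodup_odd cs ω (cs.rightInvSeq ω) h
    (fun x hx => by rw [List.count_eq_one_of_mem h hx]; decide)
  rwa [cs.length_rightInvSeq] at h2

variable (i j : B) (hm : orderOf (cs.simple i * cs.simple j) = 4)

include hm

lemma yb_pow_ne_one : ∀ k : ℕ, 0 < k → k < 4 → (cs.simple i * cs.simple j) ^ k ≠ 1 := by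
  intro k hk1 hk4 hcon
  have hdvd := orderOf_dvd_of_pow_eq_one hcon
  rw [hm] at hdvd
  have := Nat.le_of_dvd hk1 hdvd
  omega

lemma yb_powb_ne {e f : ℕ} (he : e < 4) (hf : f < 4) (hef : e ≠ f) :
    (cs.simple i * cs.simple j) ^ e * cs.simple j
      ≠ (cs.simple i * cs.simple j) ^ f * cs.simple j := by
  intro hcon
  have h1 : (cs.simple i * cs.simple j) ^ e = (cs.simple i * cs.simple j) ^ f :=
    mul_right_cancel hcon
  rcases Nat.lt_or_ge e f with hlt | hge
  · have h2 : (cs.simple i * cs.simple j) ^ e * (cs.simple i * cs.simple j) ^ (f - e)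
        = (cs.simple i * cs.simple j) ^ e * 1 := by
      rw [← pow_add, show e + (f - e) = f by omega, mul_one, h1]
    exact yb_pow_ne_one cs i j hm (f - e) (by omega) (by omega) (mul_left_cancel h2)
  · have hlt : f < e := by omega
    have h2 : (cs.simple i * cs.simple j) ^ f * (cs.simple i * cs.simple j) ^ (e - f)
        = (cs.simple i * cs.simple j) ^ f * 1 := by
      rw [← pow_add, show f + (e - f) = e by omega, mul_one, h1]
    exact yb_pow_ne_one cs i j hm (e - f) (by omega) (by omega) (mul_left_cancel h2)

end Lengths

section Lengths2

variable {B : Type*} {W : Type*} [Group W] {M : CoxeterMatrix B} (cs : CoxeterSystem M W)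
variable [DecidableEq W]
variable (i j : B)

lemma yb_main (hm : orderOf (cs.simple i * cs.simple j) = 4) :
    cs.length (cs.simple i * cs.simple j) = 2 ∧
    cs.length (cs.simple j * (cs.simple i * cs.simple j)) = 3 ∧
    cs.length (cs.simple i * (cs.simple j * cs.simple i)) = 3 ∧
    cs.length (cs.simple i * (cs.simple j * (cs.simple i * cs.simple j))) = 4 ∧
    cs.simple i * (cs.simple j * (cs.simple i * cs.simple j))
      = cs.simple j * (cs.simple i * (cs.simple j * cs.simple i)) := by
  have hainv : (cs.simple i)⁻¹ = cs.simple i := cs.inv_simple i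
  have hbinv : (cs.simple j)⁻¹ = cs.simple j := cs.inv_simple j
  have hz4 : (cs.simple i * cs.simple j)^4 = 1 := by rw [← hm]; exact pow_orderOf_eq_one _
  have hz3 : (cs.simple i * cs.simple j)^3 = (cs.simple i * cs.simple j)⁻¹ := by
    have h1 : (cs.simple i * cs.simple j) * (cs.simple i * cs.simple j)^3 = 1 := by
      rw [← pow_succ']; exact hz4
    exact (inv_eq_of_mul_eq_one_right h1).symm
  have hz2 : (cs.simple i * cs.simple j)^2 = ((cs.simple i * cs.simple j)^2)⁻¹ := by
    have h1 : (cs.simple i * cs.simple j)^2 * (cs.simple i * cs.simple j)^2 = 1 := by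
      rw [← pow_add]; exact hz4
    exact (inv_eq_of_mul_eq_one_right h1).symm
  have hp1 : cs.wordProd [j] = cs.simple j := by rw [cs.wordProd_cons, cs.wordProd_nil, mul_one]
  have hp1' : cs.wordProd [i] = cs.simple i := by rw [cs.wordProd_cons, cs.wordProd_nil, mul_one]
  have hp2 : cs.wordProd [i, j] = cs.simple i * cs.simple j := by rw [cs.wordProd_cons, hp1]
  have hp2' : cs.wordProd [j, i] = cs.simple j * cs.simple i := by rw [cs.wordProd_cons, hp1']
  have hp3 : cs.wordProd [j, i, j] = cs.simple j * (cs.simple i * cs.simple j) := by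
    rw [cs.wordProd_cons, hp2]
  have hp3' : cs.wordProd [i, j, i] = cs.simple i * (cs.simple j * cs.simple i) := by
    rw [cs.wordProd_cons, hp2']
  have hp4 : cs.wordProd [i, j, i, j]
      = cs.simple i * (cs.simple j * (cs.simple i * cs.simple j)) := by
    rw [cs.wordProd_cons, hp3]
  have hris1 : cs.rightInvSeq [j] = [(cs.simple i * cs.simple j)^0 * cs.simple j] := by
    rw [ris_cons, cs.rightInvSeq_nil, cs.wordProd_nil]
    simp
  have hris1' : cs.rightInvSeq [i] = [(cs.simple i * cs.simple j)^1 * cs.simple j] := by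
    rw [ris_cons, cs.rightInvSeq_nil, cs.wordProd_nil]
    congr 1
    simp [pow_one, mul_assoc, cs.simple_mul_simple_self]
  have hris2 : cs.rightInvSeq [i, j] = [(cs.simple i * cs.simple j)^3 * cs.simple j,
      (cs.simple i * cs.simple j)^0 * cs.simple j] := by
    rw [ris_cons, hris1, hp1]
    congr 1
    rw [hz3]
    simp only [mul_inv_rev, hainv, hbinv]
  have hris2' : cs.rightInvSeq [j, i] = [(cs.simple i * cs.simple j)^2 * cs.simple j,
      (cs.simple i * cs.simple j)^1 * cs.simple j] := by
    rw [ris_cons, hris1', hp1']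
    congr 1
    rw [hainv, pow_two]
    simp [mul_assoc, cs.simple_mul_simple_self]
  have hris3 : cs.rightInvSeq [j, i, j] = [(cs.simple i * cs.simple j)^2 * cs.simple j,
      (cs.simple i * cs.simple j)^3 * cs.simple j,
      (cs.simple i * cs.simple j)^0 * cs.simple j] := by
    rw [ris_cons, hris2, hp2]
    congr 1
    rw [hz2, pow_two]
    simp only [mul_inv_rev, hainv, hbinv]
    group
  have hris3' : cs.rightInvSeq [i, j, i] = [(cs.simple i * cs.simple j)^3 * cs.simple j,
      (cs.simple i * cs.simple j)^2 * cs.simple j,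
      (cs.simple i * cs.simple j)^1 * cs.simple j] := by
    rw [ris_cons, hris2', hp2']
    congr 1
    rw [show (cs.simple i * cs.simple j)^3
        = (cs.simple i * cs.simple j)*(cs.simple i * cs.simple j)*(cs.simple i * cs.simple j) by
      rw [pow_succ, pow_two]]
    simp only [mul_inv_rev, hainv, hbinv]
    simp [mul_assoc, cs.simple_mul_simple_self]
  have hris4 : cs.rightInvSeq [i, j, i, j] = [(cs.simple i * cs.simple j)^1 * cs.simple j,
      (cs.simple i * cs.simple j)^2 * cs.simple j,
      (cs.simple i * cs.simple j)^3 * cs.simple j,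
      (cs.simple i * cs.simple j)^0 * cs.simple j] := by
    rw [ris_cons, hris3, hp3]
    congr 1
    rw [show (cs.simple i * cs.simple j)^(1:ℕ) = ((cs.simple i * cs.simple j)^3)⁻¹ by
      rw [hz3, inv_inv, pow_one]]
    rw [show (cs.simple i * cs.simple j)^3
        = (cs.simple i * cs.simple j)*(cs.simple i * cs.simple j)*(cs.simple i * cs.simple j) by
      rw [pow_succ, pow_two]]
    simp only [mul_inv_rev, hainv, hbinv]
    group
  have hne : ∀ e f : ℕ, e < 4 → f < 4 → e ≠ f →
      (cs.simple i * cs.simple j)^e * cs.simple j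
        ≠ (cs.simple i * cs.simple j)^f * cs.simple j :=
    fun e f he hf hef => yb_powb_ne cs i j hm he hf hef
  have hnd2 : (cs.rightInvSeq [i, j]).Nodup := by
    rw [hris2]
    simp only [List.nodup_cons, List.mem_singleton, List.not_mem_nil, not_false_iff,
      List.nodup_singleton, and_true, List.nodup_nil]
    exact hne 3 0 (by omega) (by omega) (by omega)
  have hnd3 : (cs.rightInvSeq [j, i, j]).Nodup := by
    rw [hris3]
    simp only [List.nodup_cons, List.mem_cons, List.mem_singleton, List.not_mem_nil, or_false,
      List.nodup_singleton, and_true, List.nodup_nil]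
    refine ⟨?_, ?_⟩
    · push_neg
      exact ⟨hne 2 3 (by omega) (by omega) (by omega), hne 2 0 (by omega) (by omega) (by omega)⟩
    · exact ⟨hne 3 0 (by omega) (by omega) (by omega), not_false⟩
  have hnd3' : (cs.rightInvSeq [i, j, i]).Nodup := by
    rw [hris3']
    simp only [List.nodup_cons, List.mem_cons, List.mem_singleton, List.not_mem_nil, or_false,
      List.nodup_singleton, and_true, List.nodup_nil]
    refine ⟨?_, ?_⟩
    · push_neg
      exact ⟨hne 3 2 (by omega) (by omega) (by omega), hne 3 1 (by omega) (by omega) (by omega)⟩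
    · exact ⟨hne 2 1 (by omega) (by omega) (by omega), not_false⟩
  have hnd4 : (cs.rightInvSeq [i, j, i, j]).Nodup := by
    rw [hris4]
    simp only [List.nodup_cons, List.mem_cons, List.mem_singleton, List.not_mem_nil, or_false,
      List.nodup_singleton, and_true, List.nodup_nil]
    refine ⟨?_, ?_, ?_⟩
    · push_neg
      exact ⟨hne 1 2 (by omega) (by omega) (by omega), hne 1 3 (by omega) (by omega) (by omega),
        hne 1 0 (by omega) (by omega) (by omega)⟩
    · push_neg
      exact ⟨hne 2 3 (by omega) (by omega) (by omega), hne 2 0 (by omega) (by omega) (by omega)⟩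
    · exact ⟨hne 3 0 (by omega) (by omega) (by omega), not_false⟩
  have hlen2 : cs.length (cs.simple i * cs.simple j) = 2 := by
    have h := isReduced_of_nodup_ris cs [i, j] hnd2
    rw [hp2] at h
    simpa using h
  have hlen3 : cs.length (cs.simple j * (cs.simple i * cs.simple j)) = 3 := by
    have h := isReduced_of_nodup_ris cs [j, i, j] hnd3
    rw [hp3] at h
    simpa using h
  have hlen3' : cs.length (cs.simple i * (cs.simple j * cs.simple i)) = 3 := by
    have h := isReduced_of_nodup_ris cs [i, j, i] hnd3'
    rw [hp3'] at h
    simpa using h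
  have hlen4 : cs.length (cs.simple i * (cs.simple j * (cs.simple i * cs.simple j))) = 4 := by
    have h := isReduced_of_nodup_ris cs [i, j, i, j] hnd4
    rw [hp4] at h
    simpa using h
  have hw : cs.simple i * (cs.simple j * (cs.simple i * cs.simple j))
      = cs.simple j * (cs.simple i * (cs.simple j * cs.simple i)) := by
    calc cs.simple i * (cs.simple j * (cs.simple i * cs.simple j))
        = (cs.simple i * cs.simple j)^2 := by rw [pow_two]; group
      _ = ((cs.simple i * cs.simple j)^2)⁻¹ := hz2
      _ = cs.simple j * (cs.simple i * (cs.simple j * cs.simple i)) := by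
          rw [pow_two]
          simp only [mul_inv_rev, hainv, hbinv]
          group
  exact ⟨hlen2, hlen3, hlen3', hlen4, hw⟩

end Lengths2

lemma yb4 {K H : Type*} [CommRing K] [Ring H] [Algebra K H]
    (a b : H) (S P c1 c2 c3 c4 : K)
    (ha : a * a = S • a - P • (1:H)) (hb : b * b = S • b - P • (1:H))
    (hbr : a * (b * (a * b)) = b * (a * (b * a)))
    (hK : S * c2 + S * c3 + c1*c2 + c2*c3 + c3*c4 = c1 * c4) :
    (a + c1 • 1) * (b + c2 • 1) * (a + c3 • 1) * (b + c4 • 1)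
      = (b + c4 • 1) * (a + c3 • 1) * (b + c2 • 1) * (a + c1 • 1) := by
  have ha' : ∀ z : H, a * (a * z) = S • (a * z) - P • z := fun z => by
    rw [← mul_assoc, ha, sub_mul, smul_mul_assoc, smul_mul_assoc, one_mul]
  have hb' : ∀ z : H, b * (b * z) = S • (b * z) - P • z := fun z => by
    rw [← mul_assoc, hb, sub_mul, smul_mul_assoc, smul_mul_assoc, one_mul]
  simp only [add_mul, mul_add, smul_mul_assoc, mul_smul_comm, one_mul, mul_one, smul_smul,
    mul_assoc]
  rw [hbr]
  simp only [ha', hb', ha, hb, mul_sub, mul_smul_comm, mul_one, smul_sub, smul_smul]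
  match_scalars
  all_goals try ring1
  all_goals try linear_combination hK
  all_goals linear_combination -hK

lemma scalar_identity {K : Type*} [Field K] (S A Bd C D : K)
    (hA : A ≠ 0) (hB : Bd ≠ 0) (hC : C ≠ 0) (hD : D ≠ 0)
    (hN : A*C*D + A*Bd*D + C*D + A*D + A*Bd - Bd*C = 0) :
    S*(S/Bd) + S*(S/C) + (S/A)*(S/Bd) + (S/Bd)*(S/C) + (S/C)*(S/D) = (S/A)*(S/D) := by
  have h1 : S*(S/Bd) = S*S*(A*C*D)/(A*Bd*C*D) := by
    rw [mul_div_assoc']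
    rw [div_eq_div_iff hB (by exact mul_ne_zero (mul_ne_zero (mul_ne_zero hA hB) hC) hD)]
    ring
  have h2 : S*(S/C) = S*S*(A*Bd*D)/(A*Bd*C*D) := by
    rw [mul_div_assoc']
    rw [div_eq_div_iff hC (by exact mul_ne_zero (mul_ne_zero (mul_ne_zero hA hB) hC) hD)]
    ring
  have h3 : (S/A)*(S/Bd) = S*S*(C*D)/(A*Bd*C*D) := by
    rw [div_mul_div_comm]
    rw [div_eq_div_iff (mul_ne_zero hA hB) (by exact mul_ne_zero (mul_ne_zero (mul_ne_zero hA hB) hC) hD)]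
    ring
  have h4 : (S/Bd)*(S/C) = S*S*(A*D)/(A*Bd*C*D) := by
    rw [div_mul_div_comm]
    rw [div_eq_div_iff (mul_ne_zero hB hC) (by exact mul_ne_zero (mul_ne_zero (mul_ne_zero hA hB) hC) hD)]
    ring
  have h5 : (S/C)*(S/D) = S*S*(A*Bd)/(A*Bd*C*D) := by
    rw [div_mul_div_comm]
    rw [div_eq_div_iff (mul_ne_zero hC hD) (by exact mul_ne_zero (mul_ne_zero (mul_ne_zero hA hB) hC) hD)]
    ring
  have h6 : (S/A)*(S/D) = S*S*(Bd*C)/(A*Bd*C*D) := by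
    rw [div_mul_div_comm]
    rw [div_eq_div_iff (mul_ne_zero hA hD) (by exact mul_ne_zero (mul_ne_zero (mul_ne_zero hA hB) hC) hD)]
    ring
  rw [h1, h2, h3, h4, h5, h6, ← add_div, ← add_div, ← add_div,
    ← add_div, div_eq_div_iff (by exact mul_ne_zero (mul_ne_zero (mul_ne_zero hA hB) hC) hD)
      (by exact mul_ne_zero (mul_ne_zero (mul_ne_zero hA hB) hC) hD)]
  linear_combination (S*S*(A*Bd*C*D)) * hN

set_option maxHeartbeats 1000000

/-- the Yang–Baxter relation for `m_{i,j} = 4`: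
`h_i(λ) h_j(λ+ν) h_i(λ+2ν) h_j(ν) = h_j(ν) h_i(λ+2ν) h_j(λ+ν) h_i(λ)`. -/
theorem yang_baxter_relation_m_eq_four
    {r : ℕ} {W : Type*} [Group W] {M : CoxeterMatrix (Fin r)} (cs : CoxeterSystem M W)
    {Λ : Type*} [AddCommGroup Λ] (α : Fin r → Λ)
    {K : Type*} [Field K] (exp : Multiplicative Λ →* Kˣ)
    (hexp_inj : Function.Injective exp) (t1 t2 : K)
    {H : Type*} [Ring H] [Algebra K H]
    (h : W → H) (hb : Module.Basis W K H)
    (hbasis : ∀ w : W, hb w = h w)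
    (hone : h 1 = 1)
    (hmul : ∀ u v : W, cs.length (u * v) = cs.length u + cs.length v →
      h (u * v) = h u * h v)
    (hquad : ∀ i : Fin r,
      (h (cs.simple i) - algebraMap K H t1) * (h (cs.simple i) - algebraMap K H t2) = 0)
    (i j : Fin r) (hm : orderOf (cs.simple i * cs.simple j) = 4)
    (lam nu : Λ) (hlam : lam ≠ 0) (hnu : nu ≠ 0) (hln : lam + nu ≠ 0)
    (hl2n : lam + 2 • nu ≠ 0) :
    YBfactor cs exp t1 t2 h i lam * YBfactor cs exp t1 t2 h j (lam + nu) *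
        YBfactor cs exp t1 t2 h i (lam + 2 • nu) * YBfactor cs exp t1 t2 h j nu =
      YBfactor cs exp t1 t2 h j nu * YBfactor cs exp t1 t2 h i (lam + 2 • nu) *
        YBfactor cs exp t1 t2 h j (lam + nu) * YBfactor cs exp t1 t2 h i lam := by
  classical
  obtain ⟨hlen2, hlen3, hlen3', hlen4, hw⟩ := yb_main cs i j hm
  have hm' : orderOf (cs.simple j * cs.simple i) = 4 := by
    rw [SemiconjBy.orderOf_eq (cs.simple i) (show SemiconjBy (cs.simple i)
      (cs.simple j * cs.simple i) (cs.simple i * cs.simple j) from (mul_assoc _ _ _).symm)]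
    exact hm
  obtain ⟨hlen2s, hlen3s, _, hlen4s, _⟩ := yb_main cs j i hm'
  -- quadratic relations in H
  have hQ : ∀ k : Fin r, h (cs.simple k) * h (cs.simple k)
      = (t1 + t2) • h (cs.simple k) - (t1 * t2) • (1 : H) := by
    intro k
    have h0 := hquad k
    rw [Algebra.algebraMap_eq_smul_one, Algebra.algebraMap_eq_smul_one] at h0
    have h1 : h (cs.simple k) * h (cs.simple k) - (t1 + t2) • h (cs.simple k)
        + (t1 * t2) • (1 : H) = 0 := by
      rw [← h0]
      simp only [sub_mul, mul_sub, smul_mul_assoc, mul_smul_comm, smul_smul, one_mul, mul_one]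
      module
    rw [sub_add] at h1
    exact sub_eq_zero.mp h1
  -- braid relation in H
  have hab : h (cs.simple i * cs.simple j) = h (cs.simple i) * h (cs.simple j) :=
    hmul _ _ (by rw [hlen2, cs.length_simple, cs.length_simple])
  have hbab : h (cs.simple j * (cs.simple i * cs.simple j))
      = h (cs.simple j) * (h (cs.simple i) * h (cs.simple j)) := by
    rw [hmul _ _ (by rw [hlen3, cs.length_simple, hlen2]), hab]
  have h4L : h (cs.simple i * (cs.simple j * (cs.simple i * cs.simple j)))
      = h (cs.simple i) * (h (cs.simple j) * (h (cs.simple i) * h (cs.simple j))) := by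
    rw [hmul _ _ (by rw [hlen4, cs.length_simple, hlen3]), hbab]
  have hba : h (cs.simple j * cs.simple i) = h (cs.simple j) * h (cs.simple i) :=
    hmul _ _ (by rw [hlen2s, cs.length_simple, cs.length_simple])
  have haba : h (cs.simple i * (cs.simple j * cs.simple i))
      = h (cs.simple i) * (h (cs.simple j) * h (cs.simple i)) := by
    rw [hmul _ _ (by rw [hlen3', cs.length_simple, hlen2s]), hba]
  have h4R : h (cs.simple j * (cs.simple i * (cs.simple j * cs.simple i)))
      = h (cs.simple j) * (h (cs.simple i) * (h (cs.simple j) * h (cs.simple i))) := by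
    rw [hmul _ _ (by rw [hlen4s, cs.length_simple, hlen3']), haba]
  have hbraid : h (cs.simple i) * (h (cs.simple j) * (h (cs.simple i) * h (cs.simple j)))
      = h (cs.simple j) * (h (cs.simple i) * (h (cs.simple j) * h (cs.simple i))) := by
    rw [← h4L, ← h4R, hw]
  -- nonvanishing of the E's
  have hEne : ∀ mu : Λ, mu ≠ 0 → Eelt (K := K) exp mu ≠ 0 := by
    intro mu hmu hcon
    have h1 : ((exp (Multiplicative.ofAdd (-mu)) : Kˣ) : K) = 1 := by
      have h2 : ((exp (Multiplicative.ofAdd (-mu)) : Kˣ) : K) - 1 = 0 := hcon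
      rwa [sub_eq_zero] at h2
    have h2 : exp (Multiplicative.ofAdd (-mu)) = 1 := Units.val_eq_one.mp h1
    have h3 : Multiplicative.ofAdd (-mu) = 1 := hexp_inj (by rw [h2, map_one])
    apply hmu
    have h4 : -mu = 0 := by simpa using h3
    simpa using h4
  -- expressing the E's via x and y
  set x : K := ((exp (Multiplicative.ofAdd (-lam)) : Kˣ) : K) with hxdef
  set y : K := ((exp (Multiplicative.ofAdd (-nu)) : Kˣ) : K) with hydef
  have hE1 : Eelt (K := K) exp lam = x - 1 := rfl
  have hE4 : Eelt (K := K) exp nu = y - 1 := rfl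
  have hE2 : Eelt (K := K) exp (lam + nu) = x * y - 1 := by
    show ((exp (Multiplicative.ofAdd (-(lam + nu))) : Kˣ) : K) - 1 = x * y - 1
    congr 1
    rw [show Multiplicative.ofAdd (-(lam + nu))
        = Multiplicative.ofAdd (-lam) * Multiplicative.ofAdd (-nu) by rw [neg_add]; rfl]
    rw [map_mul, Units.val_mul]
  have hE3 : Eelt (K := K) exp (lam + 2 • nu) = x * y * y - 1 := by
    show ((exp (Multiplicative.ofAdd (-(lam + 2 • nu))) : Kˣ) : K) - 1 = x * y * y - 1
    congr 1
    rw [show Multiplicative.ofAdd (-(lam + 2 • nu))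
        = Multiplicative.ofAdd (-lam) * Multiplicative.ofAdd (-nu) * Multiplicative.ofAdd (-nu) by
      rw [show -(lam + 2 • nu) = -lam + -nu + -nu by rw [two_smul]; abel]; rfl]
    rw [map_mul, map_mul, Units.val_mul, Units.val_mul]
  have hx1 : x - 1 ≠ 0 := hE1 ▸ hEne lam hlam
  have hxy1 : x * y - 1 ≠ 0 := hE2 ▸ hEne (lam + nu) hln
  have hxyy1 : x * y * y - 1 ≠ 0 := hE3 ▸ hEne (lam + 2 • nu) hl2n
  have hy1 : y - 1 ≠ 0 := hE4 ▸ hEne nu hnu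
  -- the scalar identity
  have hK : (t1 + t2) * ((t1 + t2) / Eelt (K := K) exp (lam + nu))
      + (t1 + t2) * ((t1 + t2) / Eelt (K := K) exp (lam + 2 • nu))
      + ((t1 + t2) / Eelt (K := K) exp lam) * ((t1 + t2) / Eelt (K := K) exp (lam + nu))
      + ((t1 + t2) / Eelt (K := K) exp (lam + nu)) * ((t1 + t2) / Eelt (K := K) exp (lam + 2 • nu))
      + ((t1 + t2) / Eelt (K := K) exp (lam + 2 • nu)) * ((t1 + t2) / Eelt (K := K) exp nu)
      = ((t1 + t2) / Eelt (K := K) exp lam) * ((t1 + t2) / Eelt (K := K) exp nu) := by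
    rw [hE1, hE2, hE3, hE4]
    exact scalar_identity (t1+t2) (x-1) (x*y-1) (x*y*y-1) (y-1) hx1 hxy1 hxyy1 hy1 (by ring)
  simp only [YBfactor, Algebra.algebraMap_eq_smul_one]
  exact yb4 (h (cs.simple i)) (h (cs.simple j)) (t1 + t2) (t1 * t2)
    ((t1 + t2) / Eelt (K := K) exp lam) ((t1 + t2) / Eelt (K := K) exp (lam + nu))
    ((t1 + t2) / Eelt (K := K) exp (lam + 2 • nu)) ((t1 + t2) / Eelt (K := K) exp nu)
    (hQ i) (hQ j) hbraid hK
end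

section
/- For every v ∈ W, Ω(Y_{w0 v w0}) = ⋆[w0(Y_v)], where w0 is the longest element of W, Ω: H → H is the Q_{t1,t2}(Λ)-algebra homomorphism determined by Ω(h_w) = h_{w0 w w0}, and ⋆ and the w0-action are applied only to the coefficients in Q_{t1,t2}(Λ) when Y_v is written in the basis {h_w}. -/
open CoxeterSystem

/-- Apply a map `φ` to all the coefficients of `f` in the standard basis `{h_w}`. -/
noncomputable def mapCoeff {W : Type*} [Fintype W] {K : Type*} [Field K]
    {H : Type*} [Ring H] [Algebra K H] (hb : Module.Basis W K H) (h : W → H) (φ : K → K) (f : H) : H :=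
  ∑ x : W, φ (hb.repr f x) • h x

/-- The `Q_{t1,t2}(Λ)`-linear map `Ω` determined by `Ω(h_w) = h_{w0 w w0}`
(this map is in fact an algebra homomorphism). -/
noncomputable def OmegaMap {W : Type*} [Group W] [Fintype W] {K : Type*} [Field K]
    {H : Type*} [Ring H] [Algebra K H] (hb : Module.Basis W K H) (h : W → H) (w0 : W) (f : H) : H :=
  ∑ x : W, hb.repr f x • h (w0 * x * w0)

instance instCoeFunMulAddAut {Λ : Type*} [AddCommGroup Λ] :
    CoeFun (Multiplicative (AddAut Λ)) (fun _ => Λ → Λ) :=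
  ⟨fun f => ⇑(Multiplicative.toAdd f : AddAut Λ)⟩


section RootTheory

variable {r : ℕ} {W : Type*} [Group W] {M : CoxeterMatrix (Fin r)}
variable (cs : CoxeterSystem M W)
variable {Λ : Type*} [AddCommGroup Λ] (wΛ : W →* Multiplicative (AddAut Λ)) (α : Fin r → Λ)
variable (coroot : Fin r → (Λ →+ ℤ))

/-- The cone of nonnegative integer combinations of the simple roots. -/
def IsPos (α : Fin r → Λ) (lam : Λ) : Prop :=
  ∃ c : Fin r → ℤ, (∀ t, 0 ≤ c t) ∧ lam = ∑ t, c t • α t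

lemma sum_single_coeff (j : Fin r) (c : ℤ) :
    ∑ t, (if t = j then c else 0) • α t = c • α j := by
  have : ∀ t ∈ Finset.univ, (if t = j then c else 0) • α t = (if t = j then c • α t else 0) := by
    intro t _; split <;> simp
  rw [Finset.sum_congr rfl this, Finset.sum_ite_eq' Finset.univ j (fun t => c • α t)]
  simp

lemma coeff_eq (hindep : LinearIndependent ℤ α) {c d : Fin r → ℤ}
    (h : ∑ t, c t • α t = ∑ t, d t • α t) : c = d := by
  funext t
  have h0 : ∑ t, (c t - d t) • α t = 0 := by
    simp only [sub_smul, Finset.sum_sub_distrib, h, sub_self]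
  have := (Fintype.linearIndependent_iff.mp hindep) (fun t => c t - d t) h0 t
  omega

lemma isPos_zero : IsPos α 0 := ⟨fun _ => 0, fun _ => le_refl _, by simp⟩

lemma isPos_add {x y : Λ} (hx : IsPos α x) (hy : IsPos α y) : IsPos α (x + y) := by
  obtain ⟨c, hc, rfl⟩ := hx
  obtain ⟨d, hd, rfl⟩ := hy
  exact ⟨fun t => c t + d t, fun t => by dsimp only; have := hc t; have := hd t; omega,
    by simp [add_smul, Finset.sum_add_distrib]⟩

lemma isPos_smul {n : ℤ} (hn : 0 ≤ n) {x : Λ} (hx : IsPos α x) : IsPos α (n • x) := by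
  obtain ⟨c, hc, rfl⟩ := hx
  exact ⟨fun t => n * c t, fun t => mul_nonneg hn (hc t),
    by rw [Finset.smul_sum]; exact Finset.sum_congr rfl (fun t _ => (mul_smul n (c t) (α t)).symm)⟩

lemma isPos_sum {f : Fin r → Λ} (hf : ∀ t, IsPos α (f t)) : IsPos α (∑ t, f t) := by
  classical
  refine Finset.sum_induction f (IsPos α) (fun a b ha hb => isPos_add α ha hb) (isPos_zero α)
    (fun t _ => hf t)

lemma isPos_simple (j : Fin r) : IsPos α (α j) :=
  ⟨fun t => if t = j then 1 else 0, fun t => by dsimp only; split <;> omega,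
    by rw [sum_single_coeff]; simp⟩

lemma pos_neg_zero (hindep : LinearIndependent ℤ α) {x : Λ}
    (hx : IsPos α x) (hx' : IsPos α (-x)) : x = 0 := by
  obtain ⟨c, hc, hceq⟩ := hx
  obtain ⟨d, hd, hdeq⟩ := hx'
  have h0 : ∑ t, (c t + d t) • α t = ∑ t, (0 : ℤ) • α t := by
    simp only [add_smul, Finset.sum_add_distrib, ← hceq, ← hdeq]
    simp
  have := coeff_eq α hindep h0
  have hz : ∀ t, c t = 0 := by
    intro t
    have := congrFun this t
    have := hc t; have := hd t
    omega
  rw [hceq]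
  rw [Finset.sum_congr rfl (fun t _ => by rw [hz t])]
  simp



lemma coroot_pair (x j k : Fin r) (p q : ℤ) :
    coroot x (p • α j + q • α k) = p * coroot x (α j) + q * coroot x (α k) := by
  simp [map_add, map_zsmul, smul_eq_mul]

lemma stepK (hact : ∀ (i : Fin r) (lam : Λ), wΛ (cs.simple i) lam = lam - (coroot i lam) • α i)
    (hαα : ∀ i : Fin r, coroot i (α i) = 2) (j k : Fin r) (p q : ℤ) :
    wΛ (cs.simple k) (p • α j + q • α k)
      = p • α j + (-(coroot k (α j)) * p - q) • α k := by
  rw [hact, coroot_pair, hαα]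
  module

lemma stepJ (hact : ∀ (i : Fin r) (lam : Λ), wΛ (cs.simple i) lam = lam - (coroot i lam) • α i)
    (hαα : ∀ i : Fin r, coroot i (α i) = 2) (j k : Fin r) (p q : ℤ) :
    wΛ (cs.simple j) (p • α j + q • α k)
      = (-p - (coroot j (α k)) * q) • α j + q • α k := by
  rw [hact, coroot_pair, hαα]
  module

lemma alt_step (j k : Fin r) (n : ℕ) :
    wΛ (cs.wordProd (alternatingWord j k (n + 1))) (α j)
      = wΛ (cs.simple (if Even n then k else j)) (wΛ (cs.wordProd (alternatingWord j k n)) (α j)) := by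
  rw [alternatingWord_succ', wordProd_cons, map_mul, toAdd_mul, AddAut.add_apply]

lemma alt_pos
    (hact : ∀ (i : Fin r) (lam : Λ), wΛ (cs.simple i) lam = lam - (coroot i lam) • α i)
    (hαα : ∀ i : Fin r, coroot i (α i) = 2)
    (hcart : ∀ i j : Fin r, i ≠ j →
      (M.M i j = 2 ∧ coroot i (α j) = 0 ∧ coroot j (α i) = 0) ∨
      (M.M i j = 3 ∧ coroot i (α j) = -1 ∧ coroot j (α i) = -1) ∨
      (M.M i j = 4 ∧ coroot i (α j) * coroot j (α i) = 2 ∧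
        coroot i (α j) < 0 ∧ coroot j (α i) < 0) ∨
      (M.M i j = 6 ∧ coroot i (α j) * coroot j (α i) = 3 ∧
        coroot i (α j) < 0 ∧ coroot j (α i) < 0))
    (j k : Fin r) (hjk : j ≠ k) (n : ℕ) (hn : n < M.M j k) :
    ∃ p q : ℤ, 0 ≤ p ∧ 0 ≤ q ∧
      wΛ (cs.wordProd (alternatingWord j k n)) (α j) = p • α j + q • α k := by
  obtain ⟨a, ha'⟩ : ∃ x : ℤ, (coroot j) (α k) = x := ⟨_, rfl⟩
  obtain ⟨b, hb'⟩ : ∃ x : ℤ, (coroot k) (α j) = x := ⟨_, rfl⟩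
  have e0 : wΛ (cs.wordProd (alternatingWord j k 0)) (α j) = (1 : ℤ) • α j + (0 : ℤ) • α k := by
    have h1 : cs.wordProd (alternatingWord j k 0) = 1 := by simp [alternatingWord]
    rw [h1, map_one, toAdd_one, AddAut.zero_apply]
    module
  have e1 : wΛ (cs.wordProd (alternatingWord j k 1)) (α j)
      = (1 : ℤ) • α j + (-b * 1 - 0) • α k := by
    rw [alt_step, if_pos (Even.zero), e0, stepK cs wΛ α coroot hact hαα j k 1 0, hb']
  have e2 : wΛ (cs.wordProd (alternatingWord j k 2)) (α j)
      = (-1 - a * (-b * 1 - 0)) • α j + (-b * 1 - 0) • α k := by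
    rw [alt_step, if_neg (by decide), e1, stepJ cs wΛ α coroot hact hαα j k 1 (-b * 1 - 0), ha']
  have e3 : wΛ (cs.wordProd (alternatingWord j k 3)) (α j)
      = (-1 - a * (-b * 1 - 0)) • α j
        + (-b * (-1 - a * (-b * 1 - 0)) - (-b * 1 - 0)) • α k := by
    rw [alt_step, if_pos (by decide), e2, stepK cs wΛ α coroot hact hαα j k _ _, hb']
  have e4 : wΛ (cs.wordProd (alternatingWord j k 4)) (α j)
      = (-(-1 - a * (-b * 1 - 0)) - a * (-b * (-1 - a * (-b * 1 - 0)) - (-b * 1 - 0))) • α j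
        + (-b * (-1 - a * (-b * 1 - 0)) - (-b * 1 - 0)) • α k := by
    rw [alt_step, if_neg (by decide), e3, stepJ cs wΛ α coroot hact hαα j k _ _, ha']
  have e5 : wΛ (cs.wordProd (alternatingWord j k 5)) (α j)
      = (-(-1 - a * (-b * 1 - 0)) - a * (-b * (-1 - a * (-b * 1 - 0)) - (-b * 1 - 0))) • α j
        + (-b * (-(-1 - a * (-b * 1 - 0)) - a * (-b * (-1 - a * (-b * 1 - 0)) - (-b * 1 - 0)))
            - (-b * (-1 - a * (-b * 1 - 0)) - (-b * 1 - 0))) • α k := by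
    rw [alt_step, if_pos (by decide), e4, stepK cs wΛ α coroot hact hαα j k _ _, hb']
  rcases hcart j k hjk with ⟨hm, haa, hbb⟩ | ⟨hm, haa, hbb⟩ | ⟨hm, hab, ha0, hb0⟩ |
    ⟨hm, hab, ha0, hb0⟩ <;>
    first
      | (rw [ha'] at haa; rw [hb'] at hbb)
      | (rw [ha', hb'] at hab; rw [ha'] at ha0; rw [hb'] at hb0)
  · rw [hm] at hn
    interval_cases n
    · exact ⟨1, 0, by norm_num, by norm_num, e0⟩
    · exact ⟨1, -b * 1 - 0, by norm_num, by omega, e1⟩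
  · rw [hm] at hn
    interval_cases n
    · exact ⟨1, 0, by norm_num, by norm_num, e0⟩
    · exact ⟨1, -b * 1 - 0, by norm_num, by omega, e1⟩
    · exact ⟨_, _, by rw [haa, hbb]; norm_num, by omega, e2⟩
  · have hcase : (a = -1 ∧ b = -2) ∨ (a = -2 ∧ b = -1) := by
      have hd : a ∣ 2 := ⟨b, hab.symm⟩
      have h2 : -a ≤ 2 := Int.le_of_dvd (by norm_num) ((neg_dvd).mpr hd)
      have ha1 : a ≤ -1 := by omega
      have hal : -2 ≤ a := by omega
      interval_cases a
      · right; exact ⟨rfl, by omega⟩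
      · left; exact ⟨rfl, by omega⟩
    rw [hm] at hn
    rcases hcase with ⟨ha2, hb2⟩ | ⟨ha2, hb2⟩ <;> interval_cases n
    · exact ⟨1, 0, by norm_num, by norm_num, e0⟩
    · exact ⟨_, _, by norm_num, by rw [hb2]; norm_num, e1⟩
    · exact ⟨_, _, by rw [ha2, hb2]; norm_num, by rw [hb2]; norm_num, e2⟩
    · exact ⟨_, _, by rw [ha2, hb2]; norm_num, by rw [ha2, hb2]; norm_num, e3⟩
    · exact ⟨1, 0, by norm_num, by norm_num, e0⟩
    · exact ⟨_, _, by norm_num, by rw [hb2]; norm_num, e1⟩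
    · exact ⟨_, _, by rw [ha2, hb2]; norm_num, by rw [hb2]; norm_num, e2⟩
    · exact ⟨_, _, by rw [ha2, hb2]; norm_num, by rw [ha2, hb2]; norm_num, e3⟩
  · have hcase : (a = -1 ∧ b = -3) ∨ (a = -3 ∧ b = -1) := by
      have hd : a ∣ 3 := ⟨b, hab.symm⟩
      have h2 : -a ≤ 3 := Int.le_of_dvd (by norm_num) ((neg_dvd).mpr hd)
      have ha1 : a ≤ -1 := by omega
      have hal : -3 ≤ a := by omega
      interval_cases a
      · right; exact ⟨rfl, by omega⟩
      · exfalso; omega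
      · left; exact ⟨rfl, by omega⟩
    rw [hm] at hn
    rcases hcase with ⟨ha2, hb2⟩ | ⟨ha2, hb2⟩ <;> interval_cases n
    · exact ⟨1, 0, by norm_num, by norm_num, e0⟩
    · exact ⟨_, _, by norm_num, by rw [hb2]; norm_num, e1⟩
    · exact ⟨_, _, by rw [ha2, hb2]; norm_num, by rw [hb2]; norm_num, e2⟩
    · exact ⟨_, _, by rw [ha2, hb2]; norm_num, by rw [ha2, hb2]; norm_num, e3⟩
    · exact ⟨_, _, by rw [ha2, hb2]; norm_num, by rw [ha2, hb2]; norm_num, e4⟩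
    · exact ⟨_, _, by rw [ha2, hb2]; norm_num, by rw [ha2, hb2]; norm_num, e5⟩
    · exact ⟨1, 0, by norm_num, by norm_num, e0⟩
    · exact ⟨_, _, by norm_num, by rw [hb2]; norm_num, e1⟩
    · exact ⟨_, _, by rw [ha2, hb2]; norm_num, by rw [hb2]; norm_num, e2⟩
    · exact ⟨_, _, by rw [ha2, hb2]; norm_num, by rw [ha2, hb2]; norm_num, e3⟩
    · exact ⟨_, _, by rw [ha2, hb2]; norm_num, by rw [ha2, hb2]; norm_num, e4⟩
    · exact ⟨_, _, by rw [ha2, hb2]; norm_num, by rw [ha2, hb2]; norm_num, e5⟩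



lemma alt_cons (j k : Fin r) (n : ℕ) :
    cs.wordProd (alternatingWord j k (n + 1))
      = cs.simple (if Even n then k else j) * cs.wordProd (alternatingWord j k n) := by
  rw [alternatingWord_succ', wordProd_cons]

lemma alt_cancel (j k : Fin r) (n : ℕ) :
    cs.simple (if Even n then k else j) * cs.wordProd (alternatingWord j k (n + 1))
      = cs.wordProd (alternatingWord j k n) := by
  rw [alt_cons, simple_mul_simple_cancel_left]

lemma braid_flip (j k : Fin r) :
    cs.wordProd (alternatingWord j k (M.M j k)) = cs.wordProd (alternatingWord k j (M.M j k)) := by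
  have h := cs.wordProd_braidWord_eq j k
  rw [braidWord, braidWord, M.symmetric k j] at h
  exact h

lemma strip (j k : Fin r) : ∀ (n : ℕ) (w : W), cs.length w = n →
    ∃ (v : W) (ds : List (Fin r)), (∀ x ∈ ds, x = j ∨ x = k) ∧ w = v * cs.wordProd ds ∧
      cs.length w = cs.length v + ds.length ∧ ¬cs.IsRightDescent v j ∧ ¬cs.IsRightDescent v k := by
  intro n
  induction n using Nat.strong_induction_on with
  | _ n ih =>
    intro w hw
    by_cases hdj : cs.IsRightDescent w j
    · have hlen : cs.length (w * cs.simple j) + 1 = cs.length w := (cs.isRightDescent_iff).mp hdj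
      obtain ⟨v, ds, h1, h2, h3, h4, h5⟩ := ih (cs.length (w * cs.simple j)) (by omega) _ rfl
      refine ⟨v, ds ++ [j], ?_, ?_, by simp; omega, h4, h5⟩
      · intro x hx
        rcases List.mem_append.mp hx with h | h
        · exact h1 x h
        · left; simpa using h
      · calc w = (w * cs.simple j) * cs.simple j := (cs.simple_mul_simple_cancel_right j).symm
          _ = v * cs.wordProd ds * cs.simple j := by rw [← h2]
          _ = v * cs.wordProd (ds ++ [j]) := by
              rw [wordProd_append, cs.wordProd_singleton, mul_assoc]
    · by_cases hdk : cs.IsRightDescent w k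
      · have hlen : cs.length (w * cs.simple k) + 1 = cs.length w := (cs.isRightDescent_iff).mp hdk
        obtain ⟨v, ds, h1, h2, h3, h4, h5⟩ := ih (cs.length (w * cs.simple k)) (by omega) _ rfl
        refine ⟨v, ds ++ [k], ?_, ?_, by simp; omega, h4, h5⟩
        · intro x hx
          rcases List.mem_append.mp hx with h | h
          · exact h1 x h
          · right; simpa using h
        · calc w = (w * cs.simple k) * cs.simple k := (cs.simple_mul_simple_cancel_right k).symm
            _ = v * cs.wordProd ds * cs.simple k := by rw [← h2]
            _ = v * cs.wordProd (ds ++ [k]) := by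
                rw [wordProd_append, cs.wordProd_singleton, mul_assoc]
      · exact ⟨w, [], by simp, by simp, by simp, hdj, hdk⟩

lemma prepend_alt (j k : Fin r) (hm : 1 ≤ M.M j k) (x : Fin r) (hx : x = j ∨ x = k)
    (n : ℕ) (hn : n ≤ M.M j k) :
    ∃ n', n' ≤ M.M j k ∧ n' ≤ n + 1 ∧
      (cs.simple x * cs.wordProd (alternatingWord j k n) = cs.wordProd (alternatingWord j k n') ∨
       cs.simple x * cs.wordProd (alternatingWord j k n) = cs.wordProd (alternatingWord k j n')) := by
  match n with
  | 0 =>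
    have h0 : cs.wordProd (alternatingWord j k 0) = 1 := by
      show cs.wordProd [] = 1
      exact cs.wordProd_nil
    have hjk1 : alternatingWord j k 1 = [k] := by
      rw [alternatingWord_succ']
      norm_num
      rfl
    have hkj1 : alternatingWord k j 1 = [j] := by
      rw [alternatingWord_succ']
      norm_num
      rfl
    rcases hx with rfl | rfl
    · exact ⟨1, hm, by omega, Or.inr (by rw [h0, mul_one, hkj1, cs.wordProd_singleton])⟩
    · exact ⟨1, hm, by omega, Or.inl (by rw [h0, mul_one, hjk1, cs.wordProd_singleton])⟩
  | (p + 1) =>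
    by_cases hpar : x = (if Even p then k else j)
    · refine ⟨p, by omega, by omega, Or.inl ?_⟩
      rw [hpar]
      exact alt_cancel cs j k p
    · have hx' : x = (if Even (p + 1) then k else j) := by
        by_cases he : Even p
        · have h1 : ¬ Even (p + 1) := by simp [Nat.even_add_one, he]
          rw [if_pos he] at hpar
          rw [if_neg h1]
          rcases hx with rfl | rfl
          · rfl
          · exact absurd rfl hpar
        · have h1 : Even (p + 1) := Nat.even_add_one.mpr he
          rw [if_neg he] at hpar
          rw [if_pos h1]
          rcases hx with rfl | rfl
          · exact absurd rfl hpar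
          · rfl
      by_cases hnm : p + 2 ≤ M.M j k
      · refine ⟨p + 2, hnm, by omega, Or.inl ?_⟩
        rw [alt_cons cs j k (p + 1), ← hx']
      · -- p + 1 = M j k; use the braid relation
        have hm' : p + 1 = M.M j k := by omega
        have hbr : cs.wordProd (alternatingWord j k (p + 1))
            = cs.wordProd (alternatingWord k j (p + 1)) := by
          rw [hm']
          exact braid_flip cs j k
        have hx'' : x = (if Even p then j else k) := by
          by_cases he : Even p
          · have h1 : ¬ Even (p + 1) := by simp [Nat.even_add_one, he]
            rw [if_neg h1] at hx'
            rw [if_pos he]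
            exact hx'
          · have h1 : Even (p + 1) := Nat.even_add_one.mpr he
            rw [if_pos h1] at hx'
            rw [if_neg he]
            exact hx'
        refine ⟨p, by omega, by omega, Or.inr ?_⟩
        rw [hbr, hx'']
        exact alt_cancel cs k j p
 
lemma alt_reduce (j k : Fin r) (hm : 1 ≤ M.M j k) :
    ∀ μ : List (Fin r), (∀ x ∈ μ, x = j ∨ x = k) →
    ∃ n, n ≤ μ.length ∧ n ≤ M.M j k ∧
      (cs.wordProd μ = cs.wordProd (alternatingWord j k n) ∨
       cs.wordProd μ = cs.wordProd (alternatingWord k j n)) := by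
  intro μ
  induction μ with
  | nil =>
    intro _
    exact ⟨0, by simp, by omega, Or.inl rfl⟩
  | cons x μ' ihμ =>
    intro hxs
    obtain ⟨n, hlen, hnm, hd⟩ := ihμ (fun y hy => hxs y (List.mem_cons_of_mem x hy))
    have hx := hxs x (List.mem_cons_self)
    rcases hd with h1 | h2
    · obtain ⟨n', hn'm, hn'len, hd'⟩ := prepend_alt cs j k hm x hx n hnm
      refine ⟨n', by simp; omega, hn'm, ?_⟩
      rw [wordProd_cons, h1]
      exact hd'
    · have hm2 : 1 ≤ M.M k j := by rw [← M.symmetric j k]; exact hm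
      have hnm2 : n ≤ M.M k j := by rw [← M.symmetric j k]; exact hnm
      obtain ⟨n', hn'm, hn'len, hd'⟩ := prepend_alt cs k j hm2 x hx.symm n hnm2
      refine ⟨n', by simp; omega, by rw [M.symmetric j k]; exact hn'm, ?_⟩
      rw [wordProd_cons, h2]
      exact hd'.symm



lemma isPos_of_lengthen
    (hact : ∀ (i : Fin r) (lam : Λ), wΛ (cs.simple i) lam = lam - (coroot i lam) • α i)
    (hαα : ∀ i : Fin r, coroot i (α i) = 2)
    (hcart : ∀ i j : Fin r, i ≠ j →
      (M.M i j = 2 ∧ coroot i (α j) = 0 ∧ coroot j (α i) = 0) ∨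
      (M.M i j = 3 ∧ coroot i (α j) = -1 ∧ coroot j (α i) = -1) ∨
      (M.M i j = 4 ∧ coroot i (α j) * coroot j (α i) = 2 ∧
        coroot i (α j) < 0 ∧ coroot j (α i) < 0) ∨
      (M.M i j = 6 ∧ coroot i (α j) * coroot j (α i) = 3 ∧
        coroot i (α j) < 0 ∧ coroot j (α i) < 0)) :
    ∀ (n : ℕ) (w : W), cs.length w = n → ∀ j : Fin r,
      cs.length (w * cs.simple j) = cs.length w + 1 → IsPos α (wΛ w (α j)) := by
  intro n
  induction n using Nat.strong_induction_on with
  | _ n ih =>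
    intro w hw j hj
    by_cases hw1 : w = 1
    · subst hw1
      rw [map_one, toAdd_one, AddAut.zero_apply]
      exact isPos_simple α j
    · obtain ⟨k, hdk⟩ := cs.exists_rightDescent_of_ne_one hw1
      have hjk : j ≠ k := by
        rintro rfl
        have := (cs.isRightDescent_iff).mp hdk
        omega
      obtain ⟨v, ds, hds, hdec, hlen, hvj, hvk⟩ := strip cs j k (cs.length w) w rfl
      have hm1 : 1 ≤ M.M j k := by
        rcases hcart j k hjk with ⟨h,_,_⟩|⟨h,_,_⟩|⟨h,_,_,_⟩|⟨h,_,_,_⟩ <;> omega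
      have hdsne : ds ≠ [] := by
        rintro rfl
        rw [cs.wordProd_nil, mul_one] at hdec
        exact hvk (hdec ▸ hdk)
      have hlv : cs.length v < cs.length w := by
        have : 1 ≤ ds.length := List.length_pos_iff.mpr hdsne
        omega
      obtain ⟨n₁, hn₁l, hn₁m, hn₁d⟩ := alt_reduce cs j k hm1 ds hds
      classical
      have hex : ∃ m', (cs.wordProd ds = cs.wordProd (alternatingWord j k m') ∨
          cs.wordProd ds = cs.wordProd (alternatingWord k j m')) := ⟨n₁, hn₁d⟩
      obtain ⟨n₀, hn₀le, hspec, hmin⟩ :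
          ∃ n₀, n₀ ≤ n₁ ∧ (cs.wordProd ds = cs.wordProd (alternatingWord j k n₀) ∨
            cs.wordProd ds = cs.wordProd (alternatingWord k j n₀)) ∧
            (∀ m', m' < n₀ → ¬(cs.wordProd ds = cs.wordProd (alternatingWord j k m') ∨
              cs.wordProd ds = cs.wordProd (alternatingWord k j m'))) :=
        ⟨Nat.find hex, Nat.find_min' hex hn₁d, Nat.find_spec hex,
          fun m' hm' => Nat.find_min hex hm'⟩
      have hbadlem : ∀ p : ℕ, n₀ = p + 1 →
          cs.wordProd ds = cs.wordProd (alternatingWord k j n₀) → False := by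
        intro p hp hds2
        have hkj : alternatingWord k j (p + 1) = (alternatingWord j k p).concat j :=
          alternatingWord_succ k j p
        have hcanc : cs.wordProd ds * cs.simple j = cs.wordProd (alternatingWord j k p) := by
          rw [hds2, hp, hkj, wordProd_concat, simple_mul_simple_cancel_right]
        have hws : w * cs.simple j = v * cs.wordProd (alternatingWord j k p) := by
          rw [hdec, mul_assoc, hcanc]
        have hub : cs.length (w * cs.simple j) ≤ cs.length v + p := by
          rw [hws]
          calc cs.length (v * cs.wordProd (alternatingWord j k p))
              ≤ cs.length v + cs.length (cs.wordProd (alternatingWord j k p)) :=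
                cs.length_mul_le _ _
            _ ≤ cs.length v + (alternatingWord j k p).length := by
                have := cs.length_wordProd_le (alternatingWord j k p)
                omega
            _ = cs.length v + p := by rw [length_alternatingWord]
        omega
      have hds1 : cs.wordProd ds = cs.wordProd (alternatingWord j k n₀) := by
        rcases hspec with h | h
        · exact h
        · rcases Nat.eq_zero_or_eq_succ_pred n₀ with h0 | hsucc
          · rw [h0] at h ⊢
            exact h
          · exact absurd h (fun hh => hbadlem _ hsucc hh)
      have hn₀m : n₀ < M.M j k := by
        rcases Nat.lt_or_ge n₀ (M.M j k) with h | h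
        · exact h
        · exfalso
          have heq : n₀ = M.M j k := by omega
          have h2 : cs.wordProd ds = cs.wordProd (alternatingWord k j n₀) := by
            rw [hds1, heq]
            exact braid_flip cs j k
          have hpos : n₀ ≠ 0 := by omega
          exact hbadlem (n₀ - 1) (by omega) h2
      obtain ⟨p, q, hp, hq, hpq⟩ := alt_pos cs wΛ α coroot hact hαα hcart j k hjk n₀ hn₀m
      have hw' : wΛ w (α j) = p • wΛ v (α j) + q • wΛ v (α k) := by
        rw [hdec, map_mul, toAdd_mul, AddAut.add_apply, hds1, hpq, map_add, map_zsmul, map_zsmul]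
      rw [hw']
      have IH1 : IsPos α (wΛ v (α j)) :=
        ih (cs.length v) (hw ▸ hlv) v rfl j ((cs.not_isRightDescent_iff).mp hvj)
      have IH2 : IsPos α (wΛ v (α k)) :=
        ih (cs.length v) (hw ▸ hlv) v rfl k ((cs.not_isRightDescent_iff).mp hvk)
      exact isPos_add α (isPos_smul α hp IH1) (isPos_smul α hq IH2)


variable (hact : ∀ (i : Fin r) (lam : Λ), wΛ (cs.simple i) lam = lam - (coroot i lam) • α i)
variable (hαα : ∀ i : Fin r, coroot i (α i) = 2)
variable (hindep : LinearIndependent ℤ α)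
variable (hcart : ∀ i j : Fin r, i ≠ j →
      (M.M i j = 2 ∧ coroot i (α j) = 0 ∧ coroot j (α i) = 0) ∨
      (M.M i j = 3 ∧ coroot i (α j) = -1 ∧ coroot j (α i) = -1) ∨
      (M.M i j = 4 ∧ coroot i (α j) * coroot j (α i) = 2 ∧
        coroot i (α j) < 0 ∧ coroot j (α i) < 0) ∨
      (M.M i j = 6 ∧ coroot i (α j) * coroot j (α i) = 3 ∧
        coroot i (α j) < 0 ∧ coroot j (α i) < 0))

include hact hαα hcart

lemma isPos_of_not_descent {w : W} {j : Fin r} (h : ¬cs.IsRightDescent w j) :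
    IsPos α (wΛ w (α j)) :=
  isPos_of_lengthen cs wΛ α coroot hact hαα hcart (cs.length w) w rfl j
    ((cs.not_isRightDescent_iff).mp h)

lemma simple_act_self (j : Fin r) : wΛ (cs.simple j) (α j) = -(α j) := by
  rw [hact, hαα]
  module

lemma isPos_neg_of_descent {w : W} {j : Fin r} (hd : cs.IsRightDescent w j) :
    IsPos α (-(wΛ w (α j))) := by
  have hcan : (w * cs.simple j) * cs.simple j = w := cs.simple_mul_simple_cancel_right j
  have h1 : cs.length ((w * cs.simple j) * cs.simple j) = cs.length (w * cs.simple j) + 1 := by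
    rw [hcan]
    exact ((cs.isRightDescent_iff).mp hd).symm
  have h2 : IsPos α (wΛ (w * cs.simple j) (α j)) :=
    isPos_of_lengthen cs wΛ α coroot hact hαα hcart _ _ rfl j h1
  have h4 : -(wΛ w (α j)) = wΛ (w * cs.simple j) (α j) := by
    conv_lhs => rw [← hcan]
    rw [map_mul, toAdd_mul, AddAut.add_apply, simple_act_self cs wΛ α coroot hact hαα hcart, map_neg, neg_neg]
  rw [h4]
  exact h2

include hindep

lemma descent_of_isPos_neg {w : W} {j : Fin r} (h : IsPos α (-(wΛ w (α j)))) :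
    cs.IsRightDescent w j := by
  by_contra hnd
  have h2 : IsPos α (wΛ w (α j)) :=
    isPos_of_not_descent cs wΛ α coroot hact hαα hcart hnd
  have h3 : wΛ w (α j) = 0 := pos_neg_zero α hindep h2 h
  have h4 : α j = 0 := by
    have h0 : wΛ w (α j) = wΛ w 0 := by rw [h3, map_zero]
    exact (Multiplicative.toAdd (wΛ w)).injective h0
  exact hindep.ne_zero j h4

-- longest element section
variable (w0 : W) (hw0 : ∀ u : W, cs.length u ≤ cs.length w0)

omit hact hαα hcart hindep

include hw0
lemma w0_rdesc (i : Fin r) : cs.IsRightDescent w0 i :=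
  lt_of_le_of_ne (hw0 _) (cs.length_mul_simple_ne w0 i)

lemma w0_inv_rdesc (i : Fin r) : cs.IsRightDescent w0⁻¹ i := by
  unfold CoxeterSystem.IsRightDescent
  have h1 : w0⁻¹ * cs.simple i = (cs.simple i * w0)⁻¹ := by
    rw [mul_inv_rev, cs.inv_simple]
  rw [h1, cs.length_inv, cs.length_inv]
  exact lt_of_le_of_ne (hw0 _) (cs.length_simple_mul_ne w0 i)
omit hw0

include hact hαα hcart
lemma isPos_neg_map {g : W} (hg : ∀ i, cs.IsRightDescent g i) {lam : Λ} (hl : IsPos α lam) :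
    IsPos α (-(wΛ g lam)) := by
  obtain ⟨c, hc, rfl⟩ := hl
  have : -(wΛ g (∑ t, c t • α t)) = ∑ t, c t • (-(wΛ g (α t))) := by
    rw [map_sum, ← Finset.sum_neg_distrib]
    exact Finset.sum_congr rfl fun t _ => by rw [map_zsmul, smul_neg]
  rw [this]
  exact isPos_sum α (fun t => isPos_smul α (hc t)
    (isPos_neg_of_descent cs wΛ α coroot hact hαα hcart (hg t)))

include hindep hw0
lemma length_mul_w0 : ∀ (n : ℕ) (u : W), cs.length u = n →
    cs.length (u * w0) + cs.length u = cs.length w0 := by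
  intro n
  induction n using Nat.strong_induction_on with
  | _ n ih =>
    intro u hu
    by_cases hu1 : u = 1
    · subst hu1; simp
    · obtain ⟨i, hdi⟩ := cs.exists_leftDescent_of_ne_one hu1
      have hy : cs.length (cs.simple i * u) + 1 = cs.length u := (cs.isLeftDescent_iff).mp hdi
      have hrec := ih (cs.length (cs.simple i * u)) (by omega) _ rfl
      -- claim: i is a left descent of (s i * u) * w0
      have hnotld : ¬cs.IsLeftDescent (cs.simple i * u) i := by
        intro hcon
        have := (cs.isLeftDescent_iff).mp hcon
        rw [simple_mul_simple_cancel_left] at this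
        omega
      have hposy : IsPos α (wΛ (cs.simple i * u)⁻¹ (α i)) := by
        apply isPos_of_not_descent cs wΛ α coroot hact hαα hcart
        rw [cs.isRightDescent_inv_iff]
        exact hnotld
      have hld : cs.IsLeftDescent ((cs.simple i * u) * w0) i := by
        rw [← cs.isRightDescent_inv_iff]
        apply descent_of_isPos_neg cs wΛ α coroot hact hαα hindep hcart
        rw [mul_inv_rev]
        rw [map_mul, toAdd_mul, AddAut.add_apply]
        exact isPos_neg_map cs wΛ α coroot hact hαα hcart
          (w0_inv_rdesc cs w0 hw0) hposy
      have h5 : cs.length (cs.simple i * ((cs.simple i * u) * w0)) + 1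
          = cs.length ((cs.simple i * u) * w0) := (cs.isLeftDescent_iff).mp hld
      have h6 : cs.simple i * ((cs.simple i * u) * w0) = u * w0 := by
        rw [← mul_assoc, ← mul_assoc, cs.simple_mul_simple_self, one_mul]
      rw [h6] at h5
      omega

lemma w0_sq : w0 * w0 = 1 := by
  have := length_mul_w0 cs wΛ α coroot hact hαα hindep hcart w0 hw0 (cs.length w0) w0 rfl
  have h0 : cs.length (w0 * w0) = 0 := by omega
  exact (cs.length_eq_zero_iff).mp h0

lemma length_w0_mul (u : W) : cs.length (w0 * u) + cs.length u = cs.length w0 := by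
  have hinv : w0⁻¹ = w0 := by
    rw [inv_eq_iff_mul_eq_one]
    exact w0_sq cs wΛ α coroot hact hαα hindep hcart w0 hw0
  have h1 : cs.length (w0 * u) = cs.length (u⁻¹ * w0) := by
    rw [← cs.length_inv, mul_inv_rev, hinv]
  rw [h1, ← cs.length_inv u]
  exact length_mul_w0 cs wΛ α coroot hact hαα hindep hcart w0 hw0 _ u⁻¹ rfl

lemma length_conj_w0 (x : W) : cs.length (w0 * x * w0) = cs.length x := by
  have h1 := length_mul_w0 cs wΛ α coroot hact hαα hindep hcart w0 hw0 _ (w0 * x) rfl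
  have h2 := length_w0_mul cs wΛ α coroot hact hαα hindep hcart w0 hw0 x
  omega


lemma conj_root_aux (i j : Fin r) (hj : w0 * cs.simple i * w0 = cs.simple j) :
    ∃ e : ℤ, 0 ≤ e ∧ wΛ w0 (α i) = (-e) • α j := by
  have hsq := w0_sq cs wΛ α coroot hact hαα hindep hcart w0 hw0
  have hw0w0 : ∀ lam : Λ, wΛ w0 (wΛ w0 lam) = lam := by
    intro lam
    rw [← AddAut.add_apply, ← toAdd_mul, ← map_mul, hsq, map_one, toAdd_one, AddAut.zero_apply]
  have key : ∀ lam : Λ, (coroot j lam) • α j = (coroot i (wΛ w0 lam)) • (wΛ w0 (α i)) := by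
    intro lam
    have h1 : wΛ (cs.simple j) lam = wΛ w0 (wΛ (cs.simple i) (wΛ w0 lam)) := by
      rw [← hj, map_mul, toAdd_mul, map_mul, toAdd_mul, AddAut.add_apply, AddAut.add_apply]
    rw [hact, hact, map_sub, hw0w0, map_zsmul] at h1
    exact sub_right_injective h1
  have e1 : (2 : ℤ) • (wΛ w0 (α i)) = (coroot j (wΛ w0 (α i))) • α j := by
    have h2 := key (wΛ w0 (α i))
    rw [hw0w0, hαα] at h2
    exact h2.symm
  obtain ⟨d, hd0, hdeq⟩ :=
    isPos_neg_of_descent cs wΛ α coroot hact hαα hcart (w0_rdesc cs w0 hw0 i)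
  have hsum : ∑ t, (-2 * d t) • α t
      = ∑ t, (if t = j then coroot j (wΛ w0 (α i)) else 0) • α t := by
    rw [sum_single_coeff, ← e1]
    have h3 : (2 : ℤ) • (wΛ w0 (α i)) = (-2 : ℤ) • (∑ t, d t • α t) := by
      rw [← hdeq]; module
    rw [h3, Finset.smul_sum]
    exact Finset.sum_congr rfl fun t _ => (smul_smul (-2) (d t) (α t)).symm
  have hco := coeff_eq α hindep hsum
  have hdz : ∀ t, t ≠ j → d t = 0 := by
    intro t ht
    have h4 := congrFun hco t
    rw [if_neg ht] at h4
    omega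
  have hdj : -(wΛ w0 (α i)) = d j • α j := by
    rw [hdeq]
    have h5 : ∀ t, d t • α t = (if t = j then d j else 0) • α t := by
      intro t
      by_cases ht : t = j
      · subst ht; simp
      · rw [hdz t ht, if_neg ht]
    rw [Finset.sum_congr rfl fun t _ => h5 t, sum_single_coeff]
  exact ⟨d j, hd0 j, by rw [neg_smul, ← hdj, neg_neg]⟩

lemma conj_simple_root (i : Fin r) :
    ∃ j : Fin r, w0 * cs.simple i * w0 = cs.simple j ∧ wΛ w0 (α j) = -(α i) := by
  have hsq := w0_sq cs wΛ α coroot hact hαα hindep hcart w0 hw0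
  have hw0w0 : ∀ lam : Λ, wΛ w0 (wΛ w0 lam) = lam := by
    intro lam
    rw [← AddAut.add_apply, ← toAdd_mul, ← map_mul, hsq, map_one, toAdd_one, AddAut.zero_apply]
  have hl1 : cs.length (w0 * cs.simple i * w0) = 1 := by
    rw [length_conj_w0 cs wΛ α coroot hact hαα hindep hcart w0 hw0]
    exact cs.length_simple i
  obtain ⟨j, hj⟩ := (cs.length_eq_one_iff).mp hl1
  have hj' : w0 * cs.simple j * w0 = cs.simple i := by
    rw [← hj]
    calc w0 * (w0 * cs.simple i * w0) * w0
        = (w0 * w0) * cs.simple i * (w0 * w0) := by group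
      _ = cs.simple i := by rw [hsq, one_mul, mul_one]
  obtain ⟨e, he0, hee⟩ :=
    conj_root_aux cs wΛ α coroot hact hαα hindep hcart w0 hw0 j i hj'
  obtain ⟨f, hf0, hff⟩ :=
    conj_root_aux cs wΛ α coroot hact hαα hindep hcart w0 hw0 i j hj
  have hjj : α j = (e * f) • α j := by
    calc α j = wΛ w0 (wΛ w0 (α j)) := (hw0w0 _).symm
      _ = wΛ w0 ((-e) • α i) := by rw [hee]
      _ = (-e) • (wΛ w0 (α i)) := map_zsmul _ _ _
      _ = (-e) • ((-f) • α j) := by rw [hff]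
      _ = (e * f) • α j := by rw [smul_smul]; ring_nf
  have hef : e * f = 1 := by
    have h1 : ∑ t, (if t = j then e * f else 0) • α t
        = ∑ t, (if t = j then (1 : ℤ) else 0) • α t := by
      rw [sum_single_coeff, sum_single_coeff, one_smul, ← hjj]
    have h2 := congrFun (coeff_eq α hindep h1) j
    simpa using h2
  have he1 : e = 1 := by
    rcases Int.mul_eq_one_iff_eq_one_or_neg_one.mp hef with ⟨h, _⟩ | ⟨h, _⟩ <;> omega
  exact ⟨j, hj, by rw [hee, he1]; module⟩

end RootTheory

section Hecke

variable {r : ℕ} {W : Type*} [Group W] [Fintype W] {M : CoxeterMatrix (Fin r)}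
variable (cs : CoxeterSystem M W)
open scoped Classical
variable {K : Type*} [Field K] {H : Type*} [Ring H] [Algebra K H]
variable (h : W → H) (hb : Module.Basis W K H)

lemma sum_ite_basis (g : W → H) (x : W) :
    ∑ y : W, (if x = y then (1 : K) else 0) • g y = g x := by
  have h1 : ∀ y ∈ Finset.univ, (if x = y then (1 : K) else 0) • g y
      = if x = y then g y else 0 := by
    intro y _; split <;> simp
  rw [Finset.sum_congr rfl h1, Finset.sum_ite_eq]
  simp

variable (hbasis : ∀ w : W, hb w = h w)

include hbasis

lemma repr_h (x : W) : hb.repr (h x) = Finsupp.single x 1 := by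
  rw [← hbasis]; exact hb.repr_self x

lemma omega_h (w0 x : W) : OmegaMap hb h w0 (h x) = h (w0 * x * w0) := by
  unfold OmegaMap
  have h1 : ∀ y ∈ Finset.univ, hb.repr (h x) y • h (w0 * y * w0)
      = (if x = y then (1 : K) else 0) • h (w0 * y * w0) := by
    intro y _
    rw [repr_h h hb hbasis, Finsupp.single_apply]
  rw [Finset.sum_congr rfl h1, sum_ite_basis]

lemma mapCoeff_h (φ : K →+* K) (x : W) : mapCoeff hb h (⇑φ) (h x) = h x := by
  unfold mapCoeff
  have h1 : ∀ y ∈ Finset.univ, φ (hb.repr (h x) y) • h y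
      = (if x = y then (1 : K) else 0) • h y := by
    intro y _
    rw [repr_h h hb hbasis, Finsupp.single_apply]
    split <;> simp
  rw [Finset.sum_congr rfl h1, sum_ite_basis]

omit hbasis

/-- `OmegaMap` as a linear map. -/
noncomputable def omegaLin (w0 : W) : H →ₗ[K] H where
  toFun := OmegaMap hb h w0
  map_add' f g := by
    unfold OmegaMap
    simp [map_add, Finsupp.add_apply, add_smul, Finset.sum_add_distrib]
  map_smul' c f := by
    unfold OmegaMap
    simp only [map_smul, Finsupp.smul_apply, smul_eq_mul, RingHom.id_apply, Finset.smul_sum,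
      smul_smul]

lemma omegaLin_apply (w0 : W) (f : H) : omegaLin h hb w0 f = OmegaMap hb h w0 f := rfl

/-- `mapCoeff` as an additive monoid hom. -/
noncomputable def mapCoeffHom (φ : K →+* K) : H →+ H where
  toFun := mapCoeff hb h (⇑φ)
  map_zero' := by
    unfold mapCoeff
    simp
  map_add' f g := by
    unfold mapCoeff
    simp [map_add, Finsupp.add_apply, add_smul, Finset.sum_add_distrib]

lemma mapCoeffHom_apply (φ : K →+* K) (f : H) : mapCoeffHom h hb φ f = mapCoeff hb h (⇑φ) f := rfl

lemma mapCoeff_smul (φ : K →+* K) (c : K) (f : H) :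
    mapCoeff hb h (⇑φ) (c • f) = φ c • mapCoeff hb h (⇑φ) f := by
  unfold mapCoeff
  simp only [map_smul, Finsupp.smul_apply, smul_eq_mul, map_mul, Finset.smul_sum, smul_smul]


variable (t1 t2 : K)
variable (hone : h 1 = 1)
variable (hmul : ∀ u v : W, cs.length (u * v) = cs.length u + cs.length v →
      h (u * v) = h u * h v)
variable (hquad : ∀ i : Fin r,
      (h (cs.simple i) - algebraMap K H t1) * (h (cs.simple i) - algebraMap K H t2) = 0)

lemma mul_algebraMap_eq_smul (c : K) (f : H) : f * algebraMap K H c = c • f := by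
  rw [← Algebra.commutes, ← Algebra.smul_def]

include hquad

lemma h_sq (i : Fin r) :
    h (cs.simple i) * h (cs.simple i) = (t1 + t2) • h (cs.simple i) - (t1 * t2) • (1 : H) := by
  have h0 := hquad i
  set x := h (cs.simple i) with hx
  have h1 : x * algebraMap K H t2 = t2 • x := by rw [← Algebra.commutes, ← Algebra.smul_def]
  have h2 : algebraMap K H t1 * x = t1 • x := by rw [← Algebra.smul_def]
  have h3 : algebraMap K H t1 * algebraMap K H t2 = (t1 * t2) • (1 : H) := by
    rw [← map_mul, Algebra.algebraMap_eq_smul_one]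
  have e : x * x - t2 • x - t1 • x + (t1 * t2) • (1 : H) = 0 := by
    calc x * x - t2 • x - t1 • x + (t1 * t2) • (1 : H)
        = x * (x - algebraMap K H t2) - algebraMap K H t1 * (x - algebraMap K H t2) := by
          rw [mul_sub, mul_sub, h1, h2, h3]; abel
      _ = (x - algebraMap K H t1) * (x - algebraMap K H t2) := by rw [← sub_mul]
      _ = 0 := h0
  have e2 : x * x = t2 • x + t1 • x - (t1 * t2) • (1 : H) := by
    apply eq_sub_of_add_eq
    apply sub_eq_zero.mp
    calc x * x + (t1 * t2) • (1 : H) - (t2 • x + t1 • x)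
        = x * x - t2 • x - t1 • x + (t1 * t2) • (1 : H) := by abel
      _ = 0 := e
  rw [e2, add_smul]
  abel

include hbasis hmul

lemma omega_basis_mul (w0 : W) (hsq2 : w0 * w0 = 1)
    (hconjlen : ∀ y : W, cs.length (w0 * y * w0) = cs.length y)
    (i j : Fin r) (hconj : w0 * cs.simple i * w0 = cs.simple j) (x : W) :
    OmegaMap hb h w0 (h x * h (cs.simple i)) = OmegaMap hb h w0 (h x) * h (cs.simple j) := by
  have hassoc : ∀ z : W, w0 * (z * cs.simple i) * w0 = (w0 * z * w0) * cs.simple j := by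
    intro z
    rw [← hconj]
    have h1 : (w0 * z * w0) * (w0 * cs.simple i * w0)
        = w0 * z * (w0 * w0) * cs.simple i * w0 := by group
    rw [h1, hsq2]
    group
  rcases cs.length_mul_simple x i with hup | hdn
  · have hx1 : h (x * cs.simple i) = h x * h (cs.simple i) :=
      hmul x (cs.simple i) (by rw [cs.length_simple]; exact hup)
    rw [← hx1, omega_h h hb hbasis, omega_h h hb hbasis, hassoc]
    apply hmul
    rw [cs.length_simple, ← hassoc, hconjlen, hconjlen]
    exact hup
  · have hcan : (x * cs.simple i) * cs.simple i = x := cs.simple_mul_simple_cancel_right i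
    have hyl : cs.length ((x * cs.simple i) * cs.simple i)
        = cs.length (x * cs.simple i) + cs.length (cs.simple i) := by
      rw [hcan, cs.length_simple]; omega
    have hhy : h x = h (x * cs.simple i) * h (cs.simple i) := by
      conv_lhs => rw [← hcan]
      exact hmul _ _ hyl
    have hexp : h x * h (cs.simple i)
        = (t1 + t2) • h x - (t1 * t2) • h (x * cs.simple i) := by
      rw [hhy, mul_assoc, h_sq cs h t1 t2 hquad i, mul_sub, mul_smul_comm, mul_smul_comm,
        mul_one, ← hhy]
    have hconjx : w0 * x * w0 = (w0 * (x * cs.simple i) * w0) * cs.simple j := by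
      conv_lhs => rw [← hcan]
      exact hassoc _
    have hlen2 : cs.length ((w0 * (x * cs.simple i) * w0) * cs.simple j)
        = cs.length (w0 * (x * cs.simple i) * w0) + cs.length (cs.simple j) := by
      rw [← hconjx, hconjlen, hconjlen, cs.length_simple]
      omega
    have hhx2 : h (w0 * x * w0) = h (w0 * (x * cs.simple i) * w0) * h (cs.simple j) := by
      conv_lhs => rw [hconjx]
      exact hmul _ _ hlen2
    have hexp2 : h (w0 * x * w0) * h (cs.simple j)
        = (t1 + t2) • h (w0 * x * w0) - (t1 * t2) • h (w0 * (x * cs.simple i) * w0) := by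
      rw [hhx2, mul_assoc, h_sq cs h t1 t2 hquad j, mul_sub, mul_smul_comm, mul_smul_comm,
        mul_one, ← hhx2]
    have homega : OmegaMap hb h w0 ((t1 + t2) • h x - (t1 * t2) • h (x * cs.simple i))
        = (t1 + t2) • h (w0 * x * w0) - (t1 * t2) • h (w0 * (x * cs.simple i) * w0) := by
      rw [← omegaLin_apply, map_sub, map_smul, map_smul, omegaLin_apply, omegaLin_apply,
        omega_h h hb hbasis, omega_h h hb hbasis]
    rw [hexp, homega, omega_h h hb hbasis, hexp2]

lemma mapCoeff_basis_mul (φ : K →+* K) (hφ1 : φ t1 = t1) (hφ2 : φ t2 = t2) (i : Fin r) (x : W) :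
    mapCoeff hb h (⇑φ) (h x * h (cs.simple i)) = h x * h (cs.simple i) := by
  rcases cs.length_mul_simple x i with hup | hdn
  · have hx1 : h (x * cs.simple i) = h x * h (cs.simple i) :=
      hmul x (cs.simple i) (by rw [cs.length_simple]; exact hup)
    rw [← hx1, mapCoeff_h h hb hbasis]
  · have hcan : (x * cs.simple i) * cs.simple i = x := cs.simple_mul_simple_cancel_right i
    have hyl : cs.length ((x * cs.simple i) * cs.simple i)
        = cs.length (x * cs.simple i) + cs.length (cs.simple i) := by
      rw [hcan, cs.length_simple]; omega
    have hhy : h x = h (x * cs.simple i) * h (cs.simple i) := by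
      conv_lhs => rw [← hcan]
      exact hmul _ _ hyl
    have hexp : h x * h (cs.simple i)
        = (t1 + t2) • h x - (t1 * t2) • h (x * cs.simple i) := by
      rw [hhy, mul_assoc, h_sq cs h t1 t2 hquad i, mul_sub, mul_smul_comm, mul_smul_comm,
        mul_one, ← hhy]
    rw [hexp, ← mapCoeffHom_apply, map_sub, mapCoeffHom_apply, mapCoeffHom_apply,
      mapCoeff_smul, mapCoeff_smul, mapCoeff_h h hb hbasis, mapCoeff_h h hb hbasis,
      map_add, map_mul, hφ1, hφ2]

omit hmul hquad in
lemma basis_expand (f : H) : f = ∑ x : W, hb.repr f x • h x := by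
  have h0 := hb.sum_repr f
  rw [Finset.sum_congr rfl (fun x _ => by rw [hbasis x])] at h0
  exact h0.symm

lemma omega_mul_simple (w0 : W) (hsq2 : w0 * w0 = 1)
    (hconjlen : ∀ y : W, cs.length (w0 * y * w0) = cs.length y)
    (i j : Fin r) (hconj : w0 * cs.simple i * w0 = cs.simple j) (f : H) :
    OmegaMap hb h w0 (f * h (cs.simple i)) = OmegaMap hb h w0 f * h (cs.simple j) := by
  conv_lhs => rw [basis_expand h hb hbasis f]
  have e1 : (∑ x : W, hb.repr f x • h x) * h (cs.simple i)
      = ∑ x : W, hb.repr f x • (h x * h (cs.simple i)) := by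
    rw [Finset.sum_mul]
    exact Finset.sum_congr rfl fun x _ => smul_mul_assoc _ _ _
  rw [e1, ← omegaLin_apply, map_sum]
  simp only [map_smul, omegaLin_apply]
  calc ∑ x : W, hb.repr f x • OmegaMap hb h w0 (h x * h (cs.simple i))
      = ∑ x : W, hb.repr f x • (h (w0 * x * w0) * h (cs.simple j)) := by
        refine Finset.sum_congr rfl fun x _ => ?_
        rw [omega_basis_mul cs h hb hbasis t1 t2 hmul hquad w0 hsq2 hconjlen i j hconj x,
          omega_h h hb hbasis]
    _ = (∑ x : W, hb.repr f x • h (w0 * x * w0)) * h (cs.simple j) := by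
        rw [Finset.sum_mul]
        exact Finset.sum_congr rfl fun x _ => (smul_mul_assoc _ _ _).symm
    _ = OmegaMap hb h w0 f * h (cs.simple j) := rfl

lemma mapCoeff_mul_simple (φ : K →+* K) (hφ1 : φ t1 = t1) (hφ2 : φ t2 = t2)
    (i : Fin r) (f : H) :
    mapCoeff hb h (⇑φ) (f * h (cs.simple i)) = mapCoeff hb h (⇑φ) f * h (cs.simple i) := by
  conv_lhs => rw [basis_expand h hb hbasis f]
  have e1 : (∑ x : W, hb.repr f x • h x) * h (cs.simple i)
      = ∑ x : W, hb.repr f x • (h x * h (cs.simple i)) := by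
    rw [Finset.sum_mul]
    exact Finset.sum_congr rfl fun x _ => smul_mul_assoc _ _ _
  rw [e1, ← mapCoeffHom_apply, map_sum]
  calc ∑ x : W, mapCoeffHom h hb φ (hb.repr f x • (h x * h (cs.simple i)))
      = ∑ x : W, φ (hb.repr f x) • (h x * h (cs.simple i)) := by
        refine Finset.sum_congr rfl fun x _ => ?_
        rw [mapCoeffHom_apply, mapCoeff_smul,
          mapCoeff_basis_mul cs h hb hbasis t1 t2 hmul hquad φ hφ1 hφ2 i x]
    _ = (∑ x : W, φ (hb.repr f x) • h x) * h (cs.simple i) := by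
        rw [Finset.sum_mul]
        exact Finset.sum_congr rfl fun x _ => (smul_mul_assoc _ _ _).symm
    _ = mapCoeff hb h (⇑φ) f * h (cs.simple i) := rfl

end Hecke

/-- `Ω(Y_{w0 v w0}) = ⋆[w0(Y_v)]`, where `Ω` is determined by
`Ω(h_w) = h_{w0 w w0}`, and `⋆` and the `w0`-action are applied to the coefficients of
`Y_v` in the basis `{h_w}`. -/
theorem omega_yang_baxter_eq_star_w0
    {r : ℕ} {W : Type*} [Group W] [Fintype W] {M : CoxeterMatrix (Fin r)}
    (cs : CoxeterSystem M W)
    {Λ : Type*} [AddCommGroup Λ] (wΛ : W →* Multiplicative (AddAut Λ)) (α : Fin r → Λ)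
    (coroot : Fin r → (Λ →+ ℤ))
    (hact : ∀ (i : Fin r) (lam : Λ), Multiplicative.toAdd (wΛ (cs.simple i)) lam = lam - (coroot i lam) • α i)
    (hαα : ∀ i : Fin r, coroot i (α i) = 2)
    (hindep : LinearIndependent ℤ α)
    (hcart : ∀ i j : Fin r, i ≠ j →
      (M.M i j = 2 ∧ coroot i (α j) = 0 ∧ coroot j (α i) = 0) ∨
      (M.M i j = 3 ∧ coroot i (α j) = -1 ∧ coroot j (α i) = -1) ∨
      (M.M i j = 4 ∧ coroot i (α j) * coroot j (α i) = 2 ∧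
        coroot i (α j) < 0 ∧ coroot j (α i) < 0) ∨
      (M.M i j = 6 ∧ coroot i (α j) * coroot j (α i) = 3 ∧
        coroot i (α j) < 0 ∧ coroot j (α i) < 0))
    {K : Type*} [Field K] (exp : Multiplicative Λ →* Kˣ)
    (hexp_inj : Function.Injective exp)
    (t1 t2 : K) (wK : W →* RingAut K)
    (hwexp : ∀ (w : W) (lam : Λ),
      wK w ((exp (Multiplicative.ofAdd lam) : Kˣ) : K)
        = ((exp (Multiplicative.ofAdd (Multiplicative.toAdd (wΛ w) lam)) : Kˣ) : K))
    (hwt1 : ∀ w : W, wK w t1 = t1) (hwt2 : ∀ w : W, wK w t2 = t2)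
    {H : Type*} [Ring H] [Algebra K H]
    (h : W → H) (hb : Module.Basis W K H)
    (hbasis : ∀ w : W, hb w = h w)
    (hone : h 1 = 1)
    (hmul : ∀ u v : W, cs.length (u * v) = cs.length u + cs.length v →
      h (u * v) = h u * h v)
    (hquad : ∀ i : Fin r,
      (h (cs.simple i) - algebraMap K H t1) * (h (cs.simple i) - algebraMap K H t2) = 0)
    (Y : W → H) (hY1 : Y 1 = 1)
    (hYrec : ∀ (w : W) (i : Fin r), cs.length (w * cs.simple i) = cs.length w + 1 →
      Y (w * cs.simple i)
        = Y w * (h (cs.simple i) + algebraMap K H ((t1 + t2) / wK w (Eelt exp (α i)))))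
    (w0 : W) (hw0 : ∀ u : W, cs.length u ≤ cs.length w0)
    (star : K →+* K)
    (hstar_exp : ∀ lam : Λ, star ((exp (Multiplicative.ofAdd lam) : Kˣ) : K)
      = ((exp (Multiplicative.ofAdd (-lam)) : Kˣ) : K))
    (hstar_t1 : star t1 = t1) (hstar_t2 : star t2 = t2)
    (v : W) :
    OmegaMap hb h w0 (Y (w0 * v * w0))
      = mapCoeff hb h (fun c => star (wK w0 c)) (Y v) := by
  classical
  set φ : K →+* K := star.comp (wK w0).toRingHom with hφdef
  have hφ1 : φ t1 = t1 := by
    show star ((wK w0).toRingHom t1) = t1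
    rw [RingEquiv.toRingHom_eq_coe, RingHom.coe_coe, hwt1, hstar_t1]
  have hφ2 : φ t2 = t2 := by
    show star ((wK w0).toRingHom t2) = t2
    rw [RingEquiv.toRingHom_eq_coe, RingHom.coe_coe, hwt2, hstar_t2]
  have hsq2 := w0_sq cs wΛ α coroot hact hαα hindep hcart w0 hw0
  have hconjlen := length_conj_w0 cs wΛ α coroot hact hαα hindep hcart w0 hw0
  have hfun : (fun c => star (wK w0 c)) = (⇑φ : K → K) := rfl
  rw [hfun]
  suffices hmain : ∀ (n : ℕ) (u : W), cs.length u = n →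
      OmegaMap hb h w0 (Y (w0 * u * w0)) = mapCoeff hb h (⇑φ) (Y u) by
    exact hmain (cs.length v) v rfl
  intro n
  induction n using Nat.strong_induction_on with
  | _ n ih =>
    intro u hu
    by_cases hu1 : u = 1
    · subst hu1
      have hl : OmegaMap hb h w0 (Y (w0 * 1 * w0)) = OmegaMap hb h w0 (h 1) := by
        rw [mul_one, hsq2, hY1, hone]
      have hr : mapCoeff hb h (⇑φ) (Y 1) = mapCoeff hb h (⇑φ) (h 1) := by
        rw [hY1, hone]
      rw [hl, hr, omega_h h hb hbasis, mapCoeff_h h hb hbasis φ, mul_one, hsq2]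
    · obtain ⟨i, hdi⟩ := cs.exists_rightDescent_of_ne_one hu1
      have hvv : u = (u * cs.simple i) * cs.simple i := (cs.simple_mul_simple_cancel_right i).symm
      set u' := u * cs.simple i with hu'def
      have hlu' : cs.length u' + 1 = cs.length u := (cs.isRightDescent_iff).mp hdi
      have hlrec : cs.length (u' * cs.simple i) = cs.length u' + 1 := by
        rw [← hvv]; omega
      obtain ⟨j, hconj, hroot⟩ :=
        conj_simple_root cs wΛ α coroot hact hαα hindep hcart w0 hw0 i
      have hconj' : w0 * cs.simple j * w0 = cs.simple i := by
        rw [← hconj]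
        calc w0 * (w0 * cs.simple i * w0) * w0
            = (w0 * w0) * cs.simple i * (w0 * w0) := by group
          _ = cs.simple i := by rw [hsq2, one_mul, mul_one]
      have hYu : Y u = Y u' * (h (cs.simple i)
          + algebraMap K H ((t1 + t2) / wK u' (Eelt exp (α i)))) := by
        conv_lhs => rw [hvv]
        exact hYrec u' i hlrec
      have hdecomp : w0 * u * w0 = (w0 * u' * w0) * cs.simple j := by
        rw [← hconj]
        have h1 : (w0 * u' * w0) * (w0 * cs.simple i * w0)
            = w0 * u' * (w0 * w0) * cs.simple i * w0 := by group
        rw [h1, hsq2, hvv]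
        group
      have hlw0u' : cs.length ((w0 * u' * w0) * cs.simple j)
          = cs.length (w0 * u' * w0) + 1 := by
        rw [← hdecomp, hconjlen, hconjlen]
        omega
      have hYw : Y (w0 * u * w0) = Y (w0 * u' * w0) * (h (cs.simple j)
          + algebraMap K H ((t1 + t2) / wK (w0 * u' * w0) (Eelt exp (α j)))) := by
        conv_lhs => rw [hdecomp]
        exact hYrec _ j hlw0u'
      have hmmW : ∀ (g g' : W) (lam : Λ), wΛ (g * g') lam = wΛ g (wΛ g' lam) := by
        intro g g' lam
        rw [map_mul, toAdd_mul, AddAut.add_apply]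
      have hcompose : ∀ (g g' : W) (c : K), wK g (wK g' c) = wK (g * g') c := by
        intro g g' c
        rw [map_mul]
        rfl
      have hEw : ∀ (g : W) (lam : Λ), wK g (Eelt exp lam)
          = ((exp (Multiplicative.ofAdd (wΛ g (-lam))) : Kˣ) : K) - 1 := by
        intro g lam
        unfold Eelt
        rw [map_sub, map_one, hwexp]
      have hlam : wΛ (w0 * u' * w0) (-(α j)) = -(wΛ (w0 * u') (-(α i))) := by
        calc wΛ (w0 * u' * w0) (-(α j))
            = wΛ (w0 * u') (wΛ w0 (-(α j))) := hmmW (w0 * u') w0 _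
          _ = wΛ (w0 * u') (α i) := by rw [map_neg, hroot, neg_neg]
          _ = -(wΛ (w0 * u') (-(α i))) := by rw [map_neg, neg_neg]
      have hcoeff : (t1 + t2) / wK (w0 * u' * w0) (Eelt exp (α j))
          = φ ((t1 + t2) / wK u' (Eelt exp (α i))) := by
        have hnum : φ (t1 + t2) = t1 + t2 := by rw [map_add, hφ1, hφ2]
        rw [map_div₀, hnum]
        congr 1
        show wK (w0 * u' * w0) (Eelt exp (α j)) = star (wK w0 (wK u' (Eelt exp (α i))))
        rw [hcompose w0 u', hEw (w0 * u' * w0) (α j), hEw (w0 * u') (α i),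
          map_sub, map_one, hstar_exp, hlam]
      have hIH : OmegaMap hb h w0 (Y (w0 * u' * w0)) = mapCoeff hb h (⇑φ) (Y u') :=
        ih (cs.length u') (by omega) u' rfl
      rw [hYw, hYu, mul_add, mul_add, mul_algebraMap_eq_smul, mul_algebraMap_eq_smul,
        ← omegaLin_apply, map_add, map_smul, omegaLin_apply, omegaLin_apply,
        ← mapCoeffHom_apply, map_add, mapCoeffHom_apply, mapCoeffHom_apply, mapCoeff_smul,
        omega_mul_simple cs h hb hbasis t1 t2 hmul hquad w0 hsq2 hconjlen j i hconj'
          (Y (w0 * u' * w0)),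
        mapCoeff_mul_simple cs h hb hbasis t1 t2 hmul hquad φ hφ1 hφ2 i (Y u'),
        hIH, hcoeff]
end
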